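/- arXiv:1903.09549 — 5 statements merged into one kernel-verified Lean document; each statement's English description precedes it below -/
import Mathlib

section
/- Let X be a real Banach space, let P : X → X be a continuous linear projection (P ∘ P = P) whose range is subprojective, and let Z be a closed subspace of X such that P(Z) ⊆ Z and such that Z ∩ ker P is subprojective with respect to X. Then Z is subprojective with respect to X. -/
open Submodule Metric


/-- A real normed space `X` is *subprojective* if every closed infinite-dimensional
subspace of `X` contains an infinite-dimensional closed subspace that is
complemented in `X`. -/
def Subprojective (X : Type*) [NormedAddCommGroup X] [NormedSpace ℝ X] : Prop :=
  ∀ M : Submodule ℝ X, IsClosed (M : Set X) → ¬ FiniteDimensional ℝ M →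
    ∃ N : Submodule ℝ X, N ≤ M ∧ IsClosed (N : Set X) ∧ ¬ FiniteDimensional ℝ N ∧
      N.ClosedComplemented

/-- A subspace `Z` of `X` is *subprojective with respect to `X`* if every closed
infinite-dimensional subspace of `Z` contains an infinite-dimensional closed
subspace that is complemented in `X`. -/
def SubprojectiveWrt {X : Type*} [NormedAddCommGroup X] [NormedSpace ℝ X]
    (Z : Submodule ℝ X) : Prop :=
  ∀ M : Submodule ℝ X, M ≤ Z → IsClosed (M : Set X) → ¬ FiniteDimensional ℝ M →
    ∃ N : Submodule ℝ X, N ≤ M ∧ IsClosed (N : Set X) ∧ ¬ FiniteDimensional ℝ N ∧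
      N.ClosedComplemented


section Helpers

variable {X : Type*} [NormedAddCommGroup X] [NormedSpace ℝ X]

/-- Pullback lemma: if `T` is bounded below on a closed subspace `M'`, and `N` is a
closed infinite-dimensional complemented subspace of `T(M')`, then `M' ∩ T⁻¹(N)`
is a closed infinite-dimensional complemented subspace of `M'`. -/
lemma pullback_lemma (T : X →L[ℝ] X) (M' : Submodule ℝ X) (hM'c : IsClosed (M' : Set X))
    {c : ℝ} (hc : 0 < c) (hlow : ∀ x ∈ M', c * ‖x‖ ≤ ‖T x‖)
    (N : Submodule ℝ X) (hNle : N ≤ M'.map (T : X →ₗ[ℝ] X)) (hNcl : IsClosed (N : Set X))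
    (hNfin : ¬ FiniteDimensional ℝ N) (hNcompl : N.ClosedComplemented) :
    ∃ M'' : Submodule ℝ X, M'' ≤ M' ∧ IsClosed (M'' : Set X) ∧
      ¬ FiniteDimensional ℝ M'' ∧ M''.ClosedComplemented := by
  classical
  set M'' : Submodule ℝ X := M' ⊓ Submodule.comap (T : X →ₗ[ℝ] X) N with hM''def
  have hM''le : M'' ≤ M' := inf_le_left
  have hmemT : ∀ x ∈ M'', T x ∈ N := fun x hx => hx.2
  -- the restricted map
  let φ : ↥M'' →ₗ[ℝ] ↥N := (T : X →ₗ[ℝ] X).restrict hmemT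
  have hφapp : ∀ x : ↥M'', (φ x : X) = T (x : X) := fun x => rfl
  have hφinj : Function.Injective φ := by
    intro x y hxy
    have h1 : T ((x : X) - y) = 0 := by
      have : T (x : X) = T (y : X) := by
        have := congrArg (Subtype.val) hxy
        simpa [hφapp] using this
      simp [map_sub, this]
    have h2 : c * ‖(x : X) - y‖ ≤ 0 := by
      have := hlow ((x : X) - y) (sub_mem x.2.1 y.2.1)
      rw [h1] at this; simpa using this
    have : ‖(x : X) - y‖ = 0 := le_antisymm (nonpos_of_mul_nonpos_right h2 hc |>.trans (le_refl _)) (norm_nonneg _)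
    exact Subtype.ext (sub_eq_zero.mp (norm_eq_zero.mp this))
  have hφsurj : Function.Surjective φ := by
    rintro ⟨y, hy⟩
    obtain ⟨x, hxM', hxy⟩ := hNle hy
    have hxN : x ∈ Submodule.comap (T : X →ₗ[ℝ] X) N := by
      simp only [Submodule.mem_comap]
      simpa [hxy] using hy
    refine ⟨⟨x, ⟨hxM', hxN⟩⟩, ?_⟩
    exact Subtype.ext (by simpa [hφapp] using hxy)
  let e : ↥M'' ≃ₗ[ℝ] ↥N := LinearEquiv.ofBijective φ ⟨hφinj, hφsurj⟩
  have hM''fin : ¬ FiniteDimensional ℝ M'' := by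
    intro h
    exact hNfin (e.finiteDimensional)
  have hM''cl : IsClosed (M'' : Set X) := by
    have : (M'' : Set X) = (M' : Set X) ∩ (T ⁻¹' (N : Set X)) := rfl
    rw [this]
    exact hM'c.inter (hNcl.preimage T.continuous)
  obtain ⟨f, hf⟩ := hNcompl
  -- continuous inverse
  have hSbound : ∀ y : ↥N, ‖(e.symm : ↥N →ₗ[ℝ] ↥M'') y‖ ≤ c⁻¹ * ‖y‖ := by
    intro y
    have h1 : T ((e.symm y : ↥M'') : X) = (y : X) := by
      have : (φ (e.symm y) : X) = (y : X) := by
        rw [show φ (e.symm y) = e (e.symm y) from rfl, e.apply_symm_apply]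
      simpa [hφapp] using this
    have h2 := hlow ((e.symm y : ↥M'') : X) (e.symm y).2.1
    rw [h1] at h2
    have : ‖((e.symm y : ↥M'') : X)‖ ≤ c⁻¹ * ‖(y : X)‖ := by
      rw [le_inv_mul_iff₀ hc]
      simpa [mul_comm] using h2
    simpa using this
  let S : ↥N →L[ℝ] ↥M'' := LinearMap.mkContinuous (e.symm : ↥N →ₗ[ℝ] ↥M'') c⁻¹ hSbound
  refine ⟨M'', hM''le, hM''cl, hM''fin, ⟨S.comp (f.comp T), ?_⟩⟩
  intro z
  have hTz : T (z : X) ∈ N := hmemT _ z.2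
  have h1 : f (T (z : X)) = φ z := by
    have h2 := hf ⟨T (z : X), hTz⟩
    have h3 : φ z = ⟨T (z : X), hTz⟩ := Subtype.ext (hφapp z)
    rw [h3]
    exact h2
  simp only [ContinuousLinearMap.comp_apply, h1]
  show e.symm (φ z) = z
  exact e.symm_apply_apply z

/-- If `T` is bounded below on a closed subspace `M'` of a Banach space,
then `T(M')` is closed, and infinite-dimensional if `M'` is. -/
lemma image_closed_lemma [CompleteSpace X] (T : X →L[ℝ] X) (M' : Submodule ℝ X)
    (hM'c : IsClosed (M' : Set X)) {c : ℝ} (hc : 0 < c)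
    (hlow : ∀ x ∈ M', c * ‖x‖ ≤ ‖T x‖) (hfin : ¬ FiniteDimensional ℝ M') :
    IsClosed ((M'.map (T : X →ₗ[ℝ] X) : Submodule ℝ X) : Set X) ∧
      ¬ FiniteDimensional ℝ (M'.map (T : X →ₗ[ℝ] X)) := by
  haveI : CompleteSpace ↥M' := hM'c.completeSpace_coe
  let j : ↥M' →L[ℝ] X := T.comp M'.subtypeL
  have hrange : Set.range j = ((M'.map (T : X →ₗ[ℝ] X) : Submodule ℝ X) : Set X) := by
    ext y
    simp only [Set.mem_range, SetLike.mem_coe, Submodule.mem_map]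
    constructor
    · rintro ⟨z, rfl⟩; exact ⟨z, z.2, rfl⟩
    · rintro ⟨x, hx, rfl⟩; exact ⟨⟨x, hx⟩, rfl⟩
  have hanti : AntilipschitzWith (⟨c⁻¹, by positivity⟩ : NNReal) j := by
    apply ContinuousLinearMap.antilipschitz_of_bound
    intro x
    have := hlow (x : X) x.2
    have h : ‖(x : X)‖ ≤ c⁻¹ * ‖T (x : X)‖ := by
      rw [le_inv_mul_iff₀ hc]; simpa [mul_comm] using this
    exact h
  constructor
  · rw [← hrange]
    exact hanti.isClosed_range j.uniformContinuous
  · -- infinite-dimensional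
    intro h
    apply hfin
    have hinj : Function.Injective ((T : X →ₗ[ℝ] X).restrict
        (fun x hx => Submodule.mem_map_of_mem (f := (T : X →ₗ[ℝ] X)) hx :
          ∀ x ∈ M', (T : X →ₗ[ℝ] X) x ∈ M'.map (T : X →ₗ[ℝ] X))) := by
      intro x y hxy
      have h1 : T ((x : X) - y) = 0 := by
        have : T (x : X) = T (y : X) := by
          have := congrArg Subtype.val hxy
          simpa using this
        simp [map_sub, this]
      have h2 : c * ‖(x : X) - y‖ ≤ 0 := by
        have := hlow ((x : X) - y) (sub_mem x.2 y.2)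
        rw [h1] at this; simpa using this
      have : ‖(x : X) - y‖ = 0 :=
        le_antisymm (nonpos_of_mul_nonpos_right h2 hc) (norm_nonneg _)
      exact Subtype.ext (sub_eq_zero.mp (norm_eq_zero.mp this))
    exact FiniteDimensional.of_injective _ hinj

/-- If `R` is a closed subspace of `X` admitting a continuous linear retraction and `R`
is subprojective as a space, then `R` is subprojective with respect to `X`. -/
lemma subprojectiveWrt_of_retract (R : Submodule ℝ X) (hRc : IsClosed (R : Set X))
    (π : X →L[ℝ] ↥R) (hπ : ∀ y : ↥R, π (y : X) = y)
    (h : Subprojective ↥R) : SubprojectiveWrt R := by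
  intro M hMR hMcl hMfin
  set M₀ : Submodule ℝ ↥R := M.comap R.subtype with hM₀def
  have hM₀cl : IsClosed (M₀ : Set ↥R) := by
    have : (M₀ : Set ↥R) = Subtype.val ⁻¹' (M : Set X) := rfl
    rw [this]; exact hMcl.preimage continuous_subtype_val
  have e : ↥M₀ ≃ₗ[ℝ] ↥M := Submodule.comapSubtypeEquivOfLe hMR
  have hM₀fin : ¬ FiniteDimensional ℝ M₀ := fun hh => hMfin (e.finiteDimensional)
  obtain ⟨N', hN'le, hN'cl, hN'fin, f', hf'⟩ := h M₀ hM₀cl hM₀fin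
  set N : Submodule ℝ X := N'.map R.subtype with hNdef
  have hinj : Function.Injective R.subtype := Subtype.val_injective
  let e2 : ↥N' ≃ₗ[ℝ] ↥N := Submodule.equivMapOfInjective R.subtype hinj N'
  have he2 : ∀ y : ↥N', ((e2 y : ↥N) : X) = ((y : ↥R) : X) := fun y => by
    show ((Submodule.equivMapOfInjective R.subtype hinj N' y : ↥N) : X) = _
    rw [Submodule.coe_equivMapOfInjective_apply]
    rfl
  refine ⟨N, ?_, ?_, ?_, ?_⟩
  · intro x hx
    obtain ⟨y, hy, rfl⟩ := hx
    exact hN'le hy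
  · have : (N : Set X) = Subtype.val '' (N' : Set ↥R) := by
      ext x; simp [hNdef]
    rw [this]
    exact (hRc.isClosedEmbedding_subtypeVal).isClosedMap _ hN'cl
  · intro hh
    exact hN'fin (e2.symm.finiteDimensional)
  · -- closed complemented
    have hbound : ∀ y : ↥N', ‖(e2 : ↥N' →ₗ[ℝ] ↥N) y‖ ≤ 1 * ‖y‖ := by
      intro y
      simp only [one_mul, LinearEquiv.coe_coe]
      have : ‖e2 y‖ = ‖y‖ := by
        rw [show ‖e2 y‖ = ‖((e2 y : ↥N) : X)‖ from rfl, he2 y]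
        rfl
      exact le_of_eq this
    let S : ↥N' →L[ℝ] ↥N := LinearMap.mkContinuous (e2 : ↥N' →ₗ[ℝ] ↥N) 1 hbound
    refine ⟨S.comp (f'.comp π), ?_⟩
    intro z
    obtain ⟨w, hw⟩ : ∃ w : ↥N', e2 w = z := e2.surjective z
    have hzw : (z : X) = ((w : ↥R) : X) := by rw [← hw]; exact he2 w
    have h1 : π (z : X) = (w : ↥R) := by rw [hzw]; exact hπ _
    have h2 : f' ((w : ↥R)) = w := hf' w
    simp only [ContinuousLinearMap.comp_apply, h1, h2]
    exact hw

lemma inf_ker_infiniteDimensional (M : Submodule ℝ X) (hM : ¬ FiniteDimensional ℝ M)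
    {ι : Type*} [Fintype ι] (f : ι → (X →L[ℝ] ℝ)) :
    ¬ FiniteDimensional ℝ ↥(M ⊓ ⨅ i, LinearMap.ker (f i : X →ₗ[ℝ] ℝ)) := by
  classical
  intro hK
  apply hM
  set K : Submodule ℝ X := M ⊓ ⨅ i, LinearMap.ker (f i : X →ₗ[ℝ] ℝ) with hKdef
  -- linear map from M to ι → ℝ
  let φ : ↥M →ₗ[ℝ] (ι → ℝ) :=
    { toFun := fun x i => f i (x : X)
      map_add' := fun x y => by ext i; simp
      map_smul' := fun c x => by ext i; simp }
  have hker : LinearMap.ker φ = K.comap M.subtype := by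
    ext x
    simp only [LinearMap.mem_ker, Submodule.mem_comap, hKdef, Submodule.mem_inf,
      Submodule.mem_iInf, LinearMap.mem_ker]
    constructor
    · intro h
      exact ⟨x.2, fun i => congrFun h i⟩
    · intro h
      ext i
      exact h.2 i
  have hkerfin : FiniteDimensional ℝ ↥(LinearMap.ker φ) := by
    rw [hker]
    have e := Submodule.comapSubtypeEquivOfLe (inf_le_left : K ≤ M)
    exact e.symm.finiteDimensional
  haveI : FiniteDimensional ℝ (ι → ℝ) := inferInstance
  have hrangefin : FiniteDimensional ℝ ↥(LinearMap.range φ) :=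
    FiniteDimensional.finiteDimensional_submodule _
  have : (⊤ : Submodule ℝ ↥M).FG := by
    apply Submodule.fg_of_fg_map_of_fg_inf_ker φ
    · rw [Submodule.map_top]
      exact Module.Finite.iff_fg.mp hrangefin
    · rw [top_inf_eq]
      exact Module.Finite.iff_fg.mp hkerfin
  exact Module.finite_def.mpr this

/-- Norming functionals: for a finite-dimensional subspace `F` and `ρ > 0`, there is a
finite set of norm-`≤1` functionals that `(1-ρ)`-norms `F`. -/
lemma norming_functionals (F : Submodule ℝ X) [FiniteDimensional ℝ F] {ρ : ℝ} (hρ : 0 < ρ) :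
    ∃ s : Finset (X →L[ℝ] ℝ), (∀ f ∈ s, ‖f‖ ≤ 1) ∧
      ∀ y ∈ F, y ≠ 0 → ∃ f ∈ s, (1 - ρ) * ‖y‖ ≤ f y := by
  classical
  set sph : Set X := (F : Set X) ∩ sphere (0 : X) 1 with hsph
  have hcompact : IsCompact sph := by
    have h1 : IsCompact (sphere (0 : ↥F) 1) := isCompact_sphere _ _
    have h2 : sph = Subtype.val '' (sphere (0 : ↥F) 1) := by
      ext x
      simp only [hsph, Set.mem_inter_iff, SetLike.mem_coe, Set.mem_image, mem_sphere,
        dist_zero_right]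
      constructor
      · rintro ⟨hxF, hx⟩
        exact ⟨⟨x, hxF⟩, by simpa using hx, rfl⟩
      · rintro ⟨y, hy, rfl⟩
        refine ⟨y.2, ?_⟩
        simpa using hy
    rw [h2]
    exact h1.image continuous_subtype_val
  obtain ⟨t, hts, htfin, htcover⟩ := (totallyBounded_iff_subset.mp hcompact.totallyBounded)
    _ (Metric.dist_mem_uniformity hρ)
  -- choose norming functionals for each net point
  have hchoice : ∀ g ∈ t, ∃ f : X →L[ℝ] ℝ, ‖f‖ ≤ 1 ∧ f g = ‖g‖ := by
    intro g _
    obtain ⟨f, hf1, hf2⟩ := exists_dual_vector'' ℝ g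
    exact ⟨f, hf1, hf2⟩
  choose! φ hφ1 hφ2 using hchoice
  refine ⟨htfin.toFinset.image φ, ?_, ?_⟩
  · intro f hf
    simp only [Finset.mem_image, Set.Finite.mem_toFinset] at hf
    obtain ⟨g, hg, rfl⟩ := hf
    exact hφ1 g hg
  · intro y hyF hy0
    have hnorm : ‖y‖ ≠ 0 := norm_ne_zero_iff.mpr hy0
    set u : X := ‖y‖⁻¹ • y with hu
    have huF : u ∈ F := F.smul_mem _ hyF
    have hunorm : ‖u‖ = 1 := by
      rw [hu, norm_smul, norm_inv, norm_norm, inv_mul_cancel₀ hnorm]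
    have husph : u ∈ sph := ⟨huF, by simpa [mem_sphere, dist_zero_right] using hunorm⟩
    obtain ⟨g, hgt, hgu⟩ : ∃ g ∈ t, dist u g < ρ := by
      have := htcover husph
      simp only [Set.mem_iUnion, exists_prop] at this
      obtain ⟨g, hg, hdist⟩ := this
      exact ⟨g, hg, hdist⟩
    have hgsph : g ∈ sph := hts hgt
    have hgnorm : ‖g‖ = 1 := by
      have := hgsph.2
      simpa [mem_sphere, dist_zero_right] using this
    refine ⟨φ g, Finset.mem_image_of_mem φ (htfin.mem_toFinset.mpr hgt), ?_⟩
    -- φ g u ≥ 1 - ρ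
    have h1 : φ g u = φ g g + φ g (u - g) := by
      rw [← map_add]
      congr 1
      abel
    have h2 : |φ g (u - g)| ≤ ρ := by
      calc |φ g (u - g)| ≤ ‖φ g‖ * ‖u - g‖ := (φ g).le_opNorm _
        _ ≤ 1 * ρ := by
            apply _root_.mul_le_mul (hφ1 g hgt) _ (norm_nonneg _) zero_le_one
            rw [← dist_eq_norm]
            exact le_of_lt hgu
        _ = ρ := one_mul _
    have h3 : (1 - ρ) ≤ φ g u := by
      rw [h1, hφ2 g hgt, hgnorm]
      have := neg_le_of_abs_le h2
      linarith
    -- scale back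
    have h4 : φ g y = ‖y‖ * φ g u := by
      rw [hu, map_smul]
      rw [smul_eq_mul, mul_inv_cancel_left₀ hnorm]
    rw [h4, mul_comm ((1:ℝ) - ρ) ‖y‖]
    exact mul_le_mul_of_nonneg_left h3 (norm_nonneg _)

/-- Step lemma for the Mazur-type construction. -/
lemma mazur_step (T : X →L[ℝ] X) (M : Submodule ℝ X) (hMcl : IsClosed (M : Set X))
    (hs : ∀ M' : Submodule ℝ X, M' ≤ M → IsClosed (M' : Set X) → ¬ FiniteDimensional ℝ M' →
      ∀ δ : ℝ, 0 < δ → ∃ x ∈ M', ‖x‖ = 1 ∧ ‖T x‖ < δ)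
    (hMfin : ¬ FiniteDimensional ℝ M)
    (F : Submodule ℝ X) (hF : FiniteDimensional ℝ F) {δ ρ : ℝ} (hδ : 0 < δ) (hρ : 0 < ρ) :
    ∃ x ∈ M, ‖x‖ = 1 ∧ ‖T x‖ < δ ∧
      ∀ y ∈ F, ∀ l : ℝ, (1 - ρ) * ‖y‖ ≤ ‖y + l • x‖ := by
  classical
  haveI := hF
  obtain ⟨s, hs1, hs2⟩ := norming_functionals F hρ
  set K : Submodule ℝ X := M ⊓ ⨅ g : {g // g ∈ s}, LinearMap.ker ((g : X →L[ℝ] ℝ) : X →ₗ[ℝ] ℝ) with hKdef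
  have hKle : K ≤ M := inf_le_left
  have hKcl : IsClosed (K : Set X) := by
    rw [hKdef, Submodule.coe_inf, Submodule.coe_iInf]
    exact hMcl.inter (isClosed_iInter fun g => ContinuousLinearMap.isClosed_ker _)
  have hKfin : ¬ FiniteDimensional ℝ K :=
    inf_ker_infiniteDimensional M hMfin (fun g : {g // g ∈ s} => (g : X →L[ℝ] ℝ))
  obtain ⟨x, hxK, hxnorm, hTx⟩ := hs K hKle hKcl hKfin δ hδ
  have hxker : ∀ g ∈ s, g x = 0 := by
    intro g hg
    exact (Submodule.mem_iInf _).mp hxK.2 ⟨g, hg⟩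
  refine ⟨x, hKle hxK, hxnorm, hTx, ?_⟩
  intro y hyF l
  rcases eq_or_ne y 0 with rfl | hy0
  · simp only [norm_zero, mul_zero, zero_add]
    positivity
  obtain ⟨g, hgs, hgy⟩ := hs2 y hyF hy0
  calc (1 - ρ) * ‖y‖ ≤ g y := hgy
    _ = g (y + l • x) := by rw [map_add, map_smul, hxker g hgs]; simp
    _ ≤ |g (y + l • x)| := le_abs_self _
    _ ≤ ‖g‖ * ‖y + l • x‖ := g.le_opNorm _
    _ ≤ 1 * ‖y + l • x‖ := mul_le_mul_of_nonneg_right (hs1 g hgs) (norm_nonneg _)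
    _ = ‖y + l • x‖ := one_mul _

/-- Mazur-type lemma: if `T` is not bounded below on any infinite-dimensional closed
subspace of `M`, then there is an infinite-dimensional closed subspace of `M` on
which `‖T x‖ ≤ ‖x‖/2`. -/
lemma mazur_small_subspace (T : X →L[ℝ] X) (M : Submodule ℝ X) (hMcl : IsClosed (M : Set X))
    (hMfin : ¬ FiniteDimensional ℝ M)
    (hs : ∀ M' : Submodule ℝ X, M' ≤ M → IsClosed (M' : Set X) → ¬ FiniteDimensional ℝ M' →
      ∀ δ : ℝ, 0 < δ → ∃ x ∈ M', ‖x‖ = 1 ∧ ‖T x‖ < δ) :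
    ∃ M' : Submodule ℝ X, M' ≤ M ∧ IsClosed (M' : Set X) ∧ ¬ FiniteDimensional ℝ M' ∧
      ∀ x ∈ M', ‖T x‖ ≤ (1/2) * ‖x‖ := by
  classical
  set ρ : ℕ → ℝ := fun n => (1/2 : ℝ)^(n+2) with hρdef
  set δ : ℕ → ℝ := fun n => (1/2 : ℝ)^n / 32 with hδdef
  have hρpos : ∀ n, 0 < ρ n := fun n => by positivity
  have hρlt : ∀ n, ρ n ≤ 1/4 := by
    intro n
    have h : (1/2:ℝ)^(n+2) ≤ (1/2:ℝ)^2 :=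
      pow_le_pow_of_le_one (by norm_num) (by norm_num) (by omega)
    exact h.trans_eq (by norm_num)
  have hρpos1 : ∀ n, (0:ℝ) < 1 - ρ n := fun n => by have := hρlt n; linarith
  have hδpos : ∀ n, 0 < δ n := fun n => by positivity
  -- the step function
  set step : ℕ → Submodule ℝ X → X := fun n F =>
    if h : FiniteDimensional ℝ F then
      (mazur_step T M hMcl hs hMfin F h (hδpos n) (hρpos n)).choose
    else 0 with hstepdef
  -- the chain of finite-dimensional subspaces
  set G : ℕ → Submodule ℝ X := fun n =>
    Nat.rec ⊥ (fun k Fk => Fk ⊔ (ℝ ∙ (step k Fk))) n with hGdef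
  have hG0 : G 0 = ⊥ := rfl
  have hGsucc : ∀ n, G (n+1) = G n ⊔ (ℝ ∙ (step n (G n))) := fun n => rfl
  have hGfin : ∀ n, FiniteDimensional ℝ (G n) := by
    intro n
    induction n with
    | zero => rw [hG0]; infer_instance
    | succ k ih =>
      rw [hGsucc k]
      haveI := ih
      infer_instance
  set x : ℕ → X := fun n => step n (G n) with hxdef
  have hstep : ∀ n, x n ∈ M ∧ ‖x n‖ = 1 ∧ ‖T (x n)‖ < δ n ∧
      ∀ y ∈ G n, ∀ l : ℝ, (1 - ρ n) * ‖y‖ ≤ ‖y + l • x n‖ := by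
    intro n
    have h := hGfin n
    have : x n = (mazur_step T M hMcl hs hMfin (G n) h (hδpos n) (hρpos n)).choose := by
      rw [hxdef]; simp only [hstepdef, dif_pos h]
    rw [this]
    obtain ⟨h1, h2, h3, h4⟩ :=
      (mazur_step T M hMcl hs hMfin (G n) h (hδpos n) (hρpos n)).choose_spec
    exact ⟨h1, h2, h3, h4⟩
  have hxM : ∀ n, x n ∈ M := fun n => (hstep n).1
  have hxnorm : ∀ n, ‖x n‖ = 1 := fun n => (hstep n).2.1
  have hxT : ∀ n, ‖T (x n)‖ < δ n := fun n => (hstep n).2.2.1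
  have hxnorming : ∀ n, ∀ y ∈ G n, ∀ l : ℝ, (1 - ρ n) * ‖y‖ ≤ ‖y + l • x n‖ :=
    fun n => (hstep n).2.2.2
  have hGmono : Monotone G := by
    apply monotone_nat_of_le_succ
    intro n
    rw [hGsucc n]
    exact le_sup_left
  have hxG : ∀ k n, k < n → x k ∈ G n := by
    intro k n hkn
    have h1 : x k ∈ G (k+1) := by
      rw [hGsucc k]
      exact Submodule.mem_sup_right (Submodule.mem_span_singleton_self _)
    exact hGmono hkn h1
  -- partial sums
  set Sa : (ℕ → ℝ) → ℕ → X := fun a n => ∑ k ∈ Finset.range n, a k • x k with hSadef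
  have hSamem : ∀ a n, Sa a n ∈ G n := by
    intro a n
    apply Submodule.sum_mem
    intro k hk
    exact Submodule.smul_mem _ _ (hxG k n (Finset.mem_range.mp hk))
  have hSasucc : ∀ a n, Sa a (n+1) = Sa a n + a n • x n := by
    intro a n
    rw [hSadef]
    exact Finset.sum_range_succ _ _
  -- telescoping bound
  have hone : ∀ n (a : ℕ → ℝ), ‖Sa a n‖ ≤ (1 - ρ n)⁻¹ * ‖Sa a (n+1)‖ := by
    intro n a
    rw [hSasucc a n, le_inv_mul_iff₀ (hρpos1 n)]
    exact hxnorming n (Sa a n) (hSamem a n) (a n)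
  have hprod : ∀ (a : ℕ → ℝ) m n, m ≤ n →
      ‖Sa a m‖ ≤ (∏ j ∈ Finset.Ico m n, (1 - ρ j)⁻¹) * ‖Sa a n‖ := by
    intro a m n hmn
    induction n, hmn using Nat.le_induction with
    | base => simp
    | succ n hmn ih =>
      calc ‖Sa a m‖ ≤ (∏ j ∈ Finset.Ico m n, (1 - ρ j)⁻¹) * ‖Sa a n‖ := ih
        _ ≤ (∏ j ∈ Finset.Ico m n, (1 - ρ j)⁻¹) * ((1 - ρ n)⁻¹ * ‖Sa a (n+1)‖) := by
            apply mul_le_mul_of_nonneg_left (hone n a)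
            apply Finset.prod_nonneg
            intro j _
            exact le_of_lt (inv_pos.mpr (hρpos1 j))
        _ = (∏ j ∈ Finset.Ico m (n+1), (1 - ρ j)⁻¹) * ‖Sa a (n+1)‖ := by
            rw [Finset.prod_Ico_succ_top hmn]
            ring
  have hprodbound : ∀ m n : ℕ, (∏ j ∈ Finset.Ico m n, (1 - ρ j)⁻¹) ≤ 3 := by
    intro m n
    have h1 : ∀ j : ℕ, (1 - ρ j)⁻¹ ≤ Real.exp (2 * ρ j) := by
      intro j
      have h2 : (1 - ρ j)⁻¹ ≤ 1 + 2 * ρ j := by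
        rw [inv_le_iff_one_le_mul₀ (hρpos1 j)]
        have := hρlt j
        have := hρpos j
        nlinarith
      refine h2.trans ?_
      have := Real.add_one_le_exp (2 * ρ j)
      linarith
    calc (∏ j ∈ Finset.Ico m n, (1 - ρ j)⁻¹)
        ≤ ∏ j ∈ Finset.Ico m n, Real.exp (2 * ρ j) := by
          apply Finset.prod_le_prod
          · intro j _; exact le_of_lt (inv_pos.mpr (hρpos1 j))
          · intro j _; exact h1 j
      _ = Real.exp (∑ j ∈ Finset.Ico m n, 2 * ρ j) := by rw [Real.exp_sum]
      _ ≤ Real.exp 1 := by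
          apply Real.exp_le_exp.mpr
          have hsub : Finset.Ico m n ⊆ Finset.range n := by
            intro j hj
            simp only [Finset.mem_Ico] at hj
            exact Finset.mem_range.mpr hj.2
          have h3 : ∑ j ∈ Finset.Ico m n, 2 * ρ j ≤ ∑ j ∈ Finset.range n, 2 * ρ j :=
            Finset.sum_le_sum_of_subset_of_nonneg hsub
              (fun j _ _ => by positivity)
          refine h3.trans ?_
          have h4 : ∀ j : ℕ, 2 * ρ j = (1/2:ℝ)^(j+1) := by
            intro j
            rw [hρdef]
            ring
          rw [Finset.sum_congr rfl (fun j _ => h4 j)]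
          have h5 : ∑ j ∈ Finset.range n, (1/2:ℝ)^(j+1)
              = (1/2) * ∑ j ∈ Finset.range n, (1/2:ℝ)^j := by
            rw [Finset.mul_sum]
            apply Finset.sum_congr rfl
            intro j _
            ring
          rw [h5]
          have h6 : ∑ j ∈ Finset.range n, (1/2:ℝ)^j ≤ 2 := by
            rw [geom_sum_eq (by norm_num : (1/2:ℝ) ≠ 1)]
            have : (0:ℝ) ≤ (1/2:ℝ)^n := by positivity
            rw [div_le_iff_of_neg (by norm_num : (1/2:ℝ) - 1 < 0)]
            linarith
          linarith
      _ ≤ 3 := by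
          have := Real.exp_one_lt_d9
          linarith
  have hS3 : ∀ (a : ℕ → ℝ) m n, m ≤ n → ‖Sa a m‖ ≤ 3 * ‖Sa a n‖ := by
    intro a m n hmn
    refine (hprod a m n hmn).trans ?_
    exact mul_le_mul_of_nonneg_right (hprodbound m n) (norm_nonneg _)
  -- coefficient bound
  have hcoef : ∀ (a : ℕ → ℝ) n k, k < n → |a k| ≤ 6 * ‖Sa a n‖ := by
    intro a n k hkn
    have h1 : a k • x k = Sa a (k+1) - Sa a k := by rw [hSasucc a k]; abel
    have h2 : |a k| = ‖a k • x k‖ := by rw [norm_smul, hxnorm k, mul_one, Real.norm_eq_abs]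
    rw [h2, h1]
    calc ‖Sa a (k+1) - Sa a k‖ ≤ ‖Sa a (k+1)‖ + ‖Sa a k‖ := norm_sub_le _ _
      _ ≤ 3 * ‖Sa a n‖ + 3 * ‖Sa a n‖ := by
          have := hS3 a (k+1) n hkn
          have := hS3 a k n (le_of_lt hkn)
          linarith
      _ = 6 * ‖Sa a n‖ := by ring
  -- operator bound on finite sums
  have hTbound : ∀ (a : ℕ → ℝ) n, ‖T (Sa a n)‖ ≤ (1/2) * ‖Sa a n‖ := by
    intro a n
    have h1 : T (Sa a n) = ∑ k ∈ Finset.range n, a k • T (x k) := by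
      rw [hSadef]
      simp [map_sum]
    rw [h1]
    calc ‖∑ k ∈ Finset.range n, a k • T (x k)‖
        ≤ ∑ k ∈ Finset.range n, ‖a k • T (x k)‖ := norm_sum_le _ _
      _ ≤ ∑ k ∈ Finset.range n, (6 * ‖Sa a n‖) * δ k := by
          apply Finset.sum_le_sum
          intro k hk
          rw [norm_smul, Real.norm_eq_abs]
          apply mul_le_mul (hcoef a n k (Finset.mem_range.mp hk))
            (le_of_lt (hxT k)) (norm_nonneg _)
          positivity
      _ = (6 * ‖Sa a n‖) * ∑ k ∈ Finset.range n, δ k := by rw [Finset.mul_sum]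
      _ ≤ (6 * ‖Sa a n‖) * (1/16) := by
          apply mul_le_mul_of_nonneg_left _ (by positivity)
          have h2 : ∑ k ∈ Finset.range n, δ k
              = (1/32) * ∑ k ∈ Finset.range n, (1/2:ℝ)^k := by
            rw [Finset.mul_sum]
            apply Finset.sum_congr rfl
            intro k _
            rw [hδdef]
            ring
          rw [h2]
          have h6 : ∑ j ∈ Finset.range n, (1/2:ℝ)^j ≤ 2 := by
            rw [geom_sum_eq (by norm_num : (1/2:ℝ) ≠ 1)]
            have : (0:ℝ) ≤ (1/2:ℝ)^n := by positivity
            rw [div_le_iff_of_neg (by norm_num : (1/2:ℝ) - 1 < 0)]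
            linarith
          linarith
      _ ≤ (1/2) * ‖Sa a n‖ := by
          have := norm_nonneg (Sa a n)
          nlinarith
  -- linear independence
  have hli : LinearIndependent ℝ x := by
    rw [linearIndependent_iff']
    intro s g hsum i hi
    set n : ℕ := s.sup id + 1 with hndef
    have hsub : s ⊆ Finset.range n := by
      intro j hj
      rw [Finset.mem_range, hndef]
      have h := Finset.le_sup (f := id) hj
      simp only [id] at h
      omega
    set a : ℕ → ℝ := fun k => if k ∈ s then g k else 0 with hadef
    have hSa0 : Sa a n = 0 := by
      show (∑ k ∈ Finset.range n, a k • x k) = 0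
      rw [← Finset.sum_subset hsub (fun k _ hks => by
        have : a k = 0 := by simp [hadef, hks]
        rw [this, zero_smul])]
      rw [← hsum]
      apply Finset.sum_congr rfl
      intro k hk
      have : a k = g k := by simp [hadef, hk]
      rw [this]
    have := hcoef a n i (Finset.mem_range.mp (hsub hi))
    rw [hSa0, norm_zero, mul_zero] at this
    have hai : a i = 0 := abs_eq_zero.mp (le_antisymm this (abs_nonneg _))
    simpa [hadef, hi] using hai
  -- the subspace
  set M' : Submodule ℝ X := (Submodule.span ℝ (Set.range x)).topologicalClosure with hM'def
  have hspanle : Submodule.span ℝ (Set.range x) ≤ M := by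
    rw [Submodule.span_le]
    rintro _ ⟨n, rfl⟩
    exact hxM n
  have hM'le : M' ≤ M := Submodule.topologicalClosure_minimal _ hspanle hMcl
  have hM'cl : IsClosed (M' : Set X) := Submodule.isClosed_topologicalClosure _
  have hM'fin : ¬ FiniteDimensional ℝ M' := by
    intro hfin
    have hxM' : ∀ n, x n ∈ M' := fun n =>
      Submodule.le_topologicalClosure _ (Submodule.subset_span (Set.mem_range_self n))
    set x' : ℕ → ↥M' := fun n => ⟨x n, hxM' n⟩ with hx'def
    have hli' : LinearIndependent ℝ x' := by
      apply LinearIndependent.of_comp M'.subtype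
      exact hli
    exact Module.Finite.not_linearIndependent_of_infinite x' hli'
  refine ⟨M', hM'le, hM'cl, hM'fin, ?_⟩
  -- the norm bound extends to the closure
  have hC : IsClosed {y : X | ‖T y‖ ≤ (1/2) * ‖y‖} := by
    apply isClosed_le
    · exact continuous_norm.comp T.continuous
    · exact continuous_const.mul continuous_norm
  have hspanC : (Submodule.span ℝ (Set.range x) : Set X) ⊆ {y : X | ‖T y‖ ≤ (1/2) * ‖y‖} := by
    intro y hy
    rw [SetLike.mem_coe, Finsupp.mem_span_range_iff_exists_finsupp] at hy
    obtain ⟨c, hc⟩ := hy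
    set n : ℕ := c.support.sup id + 1 with hndef
    have hsub : c.support ⊆ Finset.range n := by
      intro j hj
      rw [Finset.mem_range, hndef]
      have h := Finset.le_sup (f := id) hj
      simp only [id] at h
      omega
    have hy2 : y = Sa (⇑c) n := by
      rw [← hc, Finsupp.sum]
      show _ = ∑ k ∈ Finset.range n, c k • x k
      apply Finset.sum_subset hsub
      intro k _ hks
      have : c k = 0 := Finsupp.notMem_support_iff.mp hks
      rw [this, zero_smul]
    rw [Set.mem_setOf_eq, hy2]
    exact hTbound (⇑c) n
  have : (M' : Set X) ⊆ {y : X | ‖T y‖ ≤ (1/2) * ‖y‖} := by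
    rw [hM'def, Submodule.topologicalClosure_coe]
    exact closure_minimal hspanC hC
  intro z hz
  exact this hz

end Helpers

theorem subprojectiveWrt_of_projection
    (X : Type*) [NormedAddCommGroup X] [NormedSpace ℝ X] [CompleteSpace X]
    (P : X →L[ℝ] X) (hP : ∀ x, P (P x) = P x)
    (hrange : Subprojective ↥(LinearMap.range (P : X →ₗ[ℝ] X)))
    (Z : Submodule ℝ X) (hZclosed : IsClosed (Z : Set X))
    (hPZ : ∀ x ∈ Z, P x ∈ Z)
    (hker : SubprojectiveWrt (Z ⊓ LinearMap.ker (P : X →ₗ[ℝ] X))) :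
    SubprojectiveWrt Z := by
  classical
  intro M hMZ hMcl hMfin
  set R : Submodule ℝ X := LinearMap.range (P : X →ₗ[ℝ] X) with hRdef
  have hRP : ∀ x ∈ R, P x = x := by
    rintro x ⟨y, rfl⟩
    exact hP y
  have hRcl : IsClosed (R : Set X) := by
    have heq : (R : Set X) = ((LinearMap.ker ((ContinuousLinearMap.id ℝ X - P : X →L[ℝ] X) : X →ₗ[ℝ] X) :
        Submodule ℝ X) : Set X) := by
      ext x
      simp only [SetLike.mem_coe, LinearMap.mem_ker, ContinuousLinearMap.coe_coe, ContinuousLinearMap.coe_sub',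
        Pi.sub_apply, ContinuousLinearMap.coe_id', id_eq, sub_eq_zero]
      constructor
      · intro hx
        exact (hRP x hx).symm
      · intro hx
        exact ⟨x, hx.symm⟩
    rw [heq]
    exact ContinuousLinearMap.isClosed_ker _
  let π : X →L[ℝ] ↥R := P.codRestrict R (fun x => LinearMap.mem_range_self (P : X →ₗ[ℝ] X) x)
  have hπ : ∀ y : ↥R, π (y : X) = y := by
    intro y
    apply Subtype.ext
    show P (y : X) = (y : X)
    exact hRP _ y.2
  have hwrtR : SubprojectiveWrt R := subprojectiveWrt_of_retract R hRcl π hπ hrange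
  by_cases H : ∃ M' : Submodule ℝ X, M' ≤ M ∧ IsClosed (M' : Set X) ∧
      ¬ FiniteDimensional ℝ M' ∧ ∃ c : ℝ, 0 < c ∧ ∀ x ∈ M', c * ‖x‖ ≤ ‖P x‖
  · -- P is bounded below on some infinite-dimensional closed subspace of M
    obtain ⟨M', hM'M, hM'cl, hM'fin, c, hc, hlow⟩ := H
    obtain ⟨himgcl, himgfin⟩ := image_closed_lemma P M' hM'cl hc hlow hM'fin
    have hmaple : M'.map (P : X →ₗ[ℝ] X) ≤ R := by
      rintro _ ⟨y, hy, rfl⟩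
      exact LinearMap.mem_range_self (P : X →ₗ[ℝ] X) y
    obtain ⟨N, hNle, hNcl, hNfin, hNcompl⟩ :=
      hwrtR (M'.map (P : X →ₗ[ℝ] X)) hmaple himgcl himgfin
    obtain ⟨M'', h1, h2, h3, h4⟩ :=
      pullback_lemma P M' hM'cl hc hlow N hNle hNcl hNfin hNcompl
    exact ⟨M'', h1.trans hM'M, h2, h3, h4⟩
  · -- P is bounded below on no infinite-dimensional closed subspace of M
    have hs : ∀ M' : Submodule ℝ X, M' ≤ M → IsClosed (M' : Set X) →
        ¬ FiniteDimensional ℝ M' → ∀ δ : ℝ, 0 < δ → ∃ x ∈ M', ‖x‖ = 1 ∧ ‖P x‖ < δ := by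
      intro M' hle hcl hfin δ hδ
      have hnb : ¬ ∀ x ∈ M', δ * ‖x‖ ≤ ‖P x‖ := by
        intro hcontra
        exact H ⟨M', hle, hcl, hfin, δ, hδ, hcontra⟩
      push_neg at hnb
      obtain ⟨xx, hxx, hlt⟩ := hnb
      have hx0 : xx ≠ 0 := by
        rintro rfl
        simp at hlt
      have hnx : ‖xx‖ ≠ 0 := norm_ne_zero_iff.mpr hx0
      refine ⟨‖xx‖⁻¹ • xx, M'.smul_mem _ hxx, ?_, ?_⟩
      · rw [norm_smul, norm_inv, norm_norm, inv_mul_cancel₀ hnx]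
      · rw [map_smul, norm_smul, norm_inv, norm_norm]
        rw [inv_mul_lt_iff₀ (lt_of_le_of_ne (norm_nonneg _) (Ne.symm hnx))]
        linarith [hlt]
    obtain ⟨M', hM'M, hM'cl, hM'fin, hsmall⟩ := mazur_small_subspace P M hMcl hMfin hs
    set T : X →L[ℝ] X := ContinuousLinearMap.id ℝ X - P with hTdef
    have hTapp : ∀ x : X, T x = x - P x := by
      intro x
      simp [hTdef]
    have hlow : ∀ x ∈ M', (1/2 : ℝ) * ‖x‖ ≤ ‖T x‖ := by
      intro x hx
      have h1 : ‖P x‖ ≤ (1/2) * ‖x‖ := hsmall x hx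
      have h2 : ‖x‖ - ‖P x‖ ≤ ‖x - P x‖ := norm_sub_norm_le _ _
      rw [hTapp]
      linarith
    obtain ⟨himgcl, himgfin⟩ :=
      image_closed_lemma T M' hM'cl (by norm_num : (0:ℝ) < 1/2) hlow hM'fin
    have hYle : M'.map (T : X →ₗ[ℝ] X) ≤ Z ⊓ LinearMap.ker (P : X →ₗ[ℝ] X) := by
      rintro _ ⟨y, hy, rfl⟩
      have hyZ : y ∈ Z := hMZ (hM'M hy)
      have hTy : (T : X →ₗ[ℝ] X) y = y - P y := hTapp y
      constructor
      · show (T : X →ₗ[ℝ] X) y ∈ Z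
        rw [hTy]
        exact Submodule.sub_mem Z hyZ (hPZ y hyZ)
      · show (T : X →ₗ[ℝ] X) y ∈ LinearMap.ker (P : X →ₗ[ℝ] X)
        rw [LinearMap.mem_ker, hTy, map_sub, ContinuousLinearMap.coe_coe, hP, sub_self]
    obtain ⟨N, hNle, hNcl, hNfin, hNcompl⟩ :=
      hker (M'.map (T : X →ₗ[ℝ] X)) hYle himgcl himgfin
    obtain ⟨M'', h1, h2, h3, h4⟩ :=
      pullback_lemma T M' hM'cl (by norm_num : (0:ℝ) < 1/2) hlow N hNle hNcl hNfin hNcompl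
    exact ⟨M'', h1.trans hM'M, h2, h3, h4⟩
end

section
/- Let K be a compact Hausdorff space, let X be a real Banach space, and let M be a closed separable subspace of C(K,X). Then there exist a separable closed linear subspace G of C(K,ℝ) and a separable closed linear subspace Z of X such that M is contained in the closed linear span in C(K,X) of the set of functions { k ↦ g(k) • x : g ∈ G, x ∈ Z }. -/
open TopologicalSpace

/-- Partition-of-unity style approximation: any continuous function into a normed space
can be uniformly approximated by finite sums `∑ gᵢ • f kᵢ`. -/
lemma approx_lemma {K X : Type*} [TopologicalSpace K] [CompactSpace K]
    [NormedAddCommGroup X] [NormedSpace ℝ X]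
    (f : C(K, X)) (ε : ℝ) (hε : 0 < ε) :
    ∃ (t : Finset K) (g : K → C(K, ℝ)) (F : K → C(K, X)),
      (∀ i ∈ t, ∀ k, F i k = g i k • f i) ∧ ‖f - ∑ i ∈ t, F i‖ ≤ ε := by
  classical
  cases isEmpty_or_nonempty K with
  | inl h =>
    refine ⟨∅, fun _ => 0, fun _ => 0, by simp, ?_⟩
    have : f - ∑ i ∈ (∅ : Finset K), (0 : C(K, X)) = 0 := by
      ext k; exact isEmptyElim k
    rw [this, norm_zero]; exact hε.le
  | inr h =>
    set U : K → Set K := fun i => {k | ‖f k - f i‖ < ε} with hU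
    have hUopen : ∀ i, IsOpen (U i) := by
      intro i
      exact isOpen_lt (by fun_prop) continuous_const
    have hUcov : (Set.univ : Set K) ⊆ ⋃ i, U i := by
      intro k _
      exact Set.mem_iUnion.2 ⟨k, by simp [hU, hε]⟩
    obtain ⟨t, ht⟩ := isCompact_univ.elim_finite_subcover U hUopen hUcov
    set hfun : K → K → ℝ := fun i k => max 0 (ε - ‖f k - f i‖) with hhfun
    have hcont : ∀ i, Continuous (hfun i) := by intro i; fun_prop
    have hnonneg : ∀ i k, 0 ≤ hfun i k := fun i k => le_max_left _ _
    set s : K → ℝ := fun k => ∑ i ∈ t, hfun i k with hs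
    have hscont : Continuous s := continuous_finset_sum _ fun i _ => hcont i
    have hspos : ∀ k, 0 < s k := by
      intro k
      obtain ⟨i, hit, hki⟩ := by
        have := ht (Set.mem_univ k)
        simpa using this
      refine Finset.sum_pos' (fun j _ => hnonneg j k) ⟨i, hit, ?_⟩
      have : 0 < ε - ‖f k - f i‖ := by simpa [hU, sub_pos] using hki
      simp only [hhfun, lt_max_iff]
      exact Or.inr this
    set g : K → C(K, ℝ) := fun i => ⟨fun k => hfun i k / s k,
      (hcont i).div hscont fun k => (hspos k).ne'⟩ with hg
    set F : K → C(K, X) := fun i => ⟨fun k => (g i k) • f i,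
      ((g i).continuous.smul continuous_const)⟩ with hF
    refine ⟨t, g, F, fun i _ k => rfl, ?_⟩
    rw [ContinuousMap.norm_le _ hε.le]
    intro k
    have hsum1 : ∑ i ∈ t, g i k = 1 := by
      simp only [hg, ContinuousMap.coe_mk]
      rw [← Finset.sum_div, div_self (hspos k).ne']
    have hfk : f k = ∑ i ∈ t, g i k • f k := by
      rw [← Finset.sum_smul, hsum1, one_smul]
    have heval : (f - ∑ i ∈ t, F i) k = ∑ i ∈ t, g i k • (f k - f i) := by
      simp only [ContinuousMap.sub_apply, ContinuousMap.coe_sum, Finset.sum_apply]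
      rw [Finset.sum_congr rfl (fun i _ => smul_sub (g i k) (f k) (f i)),
        Finset.sum_sub_distrib, ← hfk]
      rfl
    rw [heval]
    calc ‖∑ i ∈ t, g i k • (f k - f i)‖ ≤ ∑ i ∈ t, ‖g i k • (f k - f i)‖ :=
          norm_sum_le _ _
      _ ≤ ∑ i ∈ t, g i k * ε := by
          refine Finset.sum_le_sum fun i _ => ?_
          have hgnn : (0:ℝ) ≤ g i k := div_nonneg (hnonneg i k) (hspos k).le
          rw [norm_smul, Real.norm_eq_abs, abs_of_nonneg hgnn]
          rcases eq_or_lt_of_le (hnonneg i k) with h0 | h0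
          · have : g i k = 0 := by simp [hg, ← h0]
            simp [this]
          · refine mul_le_mul_of_nonneg_left ?_ hgnn
            have : 0 < ε - ‖f k - f i‖ := by
              by_contra hc
              push_neg at hc
              simp [hhfun, max_eq_left hc] at h0
            linarith
      _ = ε := by rw [← Finset.sum_mul, hsum1, one_mul]



theorem exists_separable_subspaces_of_separable_subspace
    (K : Type*) [TopologicalSpace K] [CompactSpace K] [T2Space K]
    (X : Type*) [NormedAddCommGroup X] [NormedSpace ℝ X]
    (M : Submodule ℝ C(K, X)) (hMclosed : IsClosed (M : Set C(K, X)))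
    (hMsep : TopologicalSpace.IsSeparable (M : Set C(K, X))) :
    ∃ G : Submodule ℝ C(K, ℝ), ∃ Z : Submodule ℝ X,
      IsClosed (G : Set C(K, ℝ)) ∧ TopologicalSpace.IsSeparable (G : Set C(K, ℝ)) ∧
      IsClosed (Z : Set X) ∧ TopologicalSpace.IsSeparable (Z : Set X) ∧
      M ≤ (Submodule.span ℝ
        { f : C(K, X) | ∃ g ∈ G, ∃ x ∈ Z, ∀ k : K, f k = g k • x }).topologicalClosure := by
  classical
  obtain ⟨c, hc_count, hc_sub⟩ := hMsep
  have H : ∀ (d : C(K, X)) (n : ℕ), ∃ (t : Finset K) (g : K → C(K, ℝ)) (F : K → C(K, X)),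
      (∀ i ∈ t, ∀ k, F i k = g i k • d i) ∧ ‖d - ∑ i ∈ t, F i‖ ≤ 1 / (n + 1) :=
    fun d n => approx_lemma d _ (by positivity)
  choose t g F hF hdist using H
  have := hc_count.to_subtype
  set Zs : Set X := ⋃ d ∈ c, Set.range d with hZs
  set Gs : Set C(K, ℝ) := ⋃ d ∈ c, ⋃ n : ℕ, g d n '' (t d n) with hGs
  have hZs_sep : IsSeparable Zs := by
    rw [hZs, Set.biUnion_eq_iUnion]
    exact .iUnion fun d => (isCompact_range (d : C(K, X)).continuous).isSeparable
  have hGs_sep : IsSeparable Gs := by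
    refine Set.Countable.isSeparable ?_
    refine Set.Countable.biUnion hc_count fun d _ => Set.countable_iUnion fun n => ?_
    exact ((t d n).countable_toSet.image _)
  refine ⟨(Submodule.span ℝ Gs).topologicalClosure, (Submodule.span ℝ Zs).topologicalClosure,
    ?_, ?_, ?_, ?_, ?_⟩
  · rw [Submodule.topologicalClosure_coe]; exact isClosed_closure
  · rw [Submodule.topologicalClosure_coe]; exact hGs_sep.span.closure
  · rw [Submodule.topologicalClosure_coe]; exact isClosed_closure
  · rw [Submodule.topologicalClosure_coe]; exact hZs_sep.span.closure
  · intro m hm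
    set S : Set C(K, X) := { f : C(K, X) | ∃ g₀ ∈ (Submodule.span ℝ Gs).topologicalClosure,
      ∃ x ∈ (Submodule.span ℝ Zs).topologicalClosure, ∀ k : K, f k = g₀ k • x } with hS
    rw [← SetLike.mem_coe, Submodule.topologicalClosure_coe, Metric.mem_closure_iff]
    intro ε hε
    have hmc : m ∈ closure c := hc_sub hm
    obtain ⟨d, hdc, hmd⟩ := Metric.mem_closure_iff.1 hmc (ε / 2) (half_pos hε)
    obtain ⟨n, hn⟩ := exists_nat_one_div_lt (half_pos hε)
    refine ⟨∑ i ∈ t d n, F d n i, ?_, ?_⟩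
    · refine Submodule.sum_mem _ fun i hi => Submodule.subset_span ?_
      refine ⟨g d n i, ?_, d i, ?_, fun k => hF d n i hi k⟩
      · exact Submodule.le_topologicalClosure _ (Submodule.subset_span
          (Set.mem_biUnion hdc (Set.mem_iUnion.2 ⟨n, Set.mem_image_of_mem _ hi⟩)))
      · exact Submodule.le_topologicalClosure _ (Submodule.subset_span
          (Set.mem_biUnion hdc (Set.mem_range_self i)))
    · calc dist m (∑ i ∈ t d n, F d n i)
          ≤ dist m d + dist d (∑ i ∈ t d n, F d n i) := dist_triangle _ _ _
        _ < ε / 2 + ε / 2 := by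
            refine add_lt_add hmd (lt_of_le_of_lt ?_ hn)
            rw [dist_eq_norm]
            exact hdist d n
        _ = ε := add_halves ε
end

section
/- Let K be a compact Hausdorff space, let X be a real Banach space, let (V_n)_{n∈ℕ} be a sequence of pairwise disjoint clopen subsets of K, and let (f_n)_{n∈ℕ} be a sequence in C(K,X) such that for each n: ‖f_n‖ = 1, f_n vanishes outside V_n, and there is a point t_n ∈ V_n with ‖f_n(t_n)‖ = 1. Assume moreover that the sequence (t_n) converges to a point t_∞ ∈ K with t_∞ ∉ ⋃_{n∈ℕ} V_n. Then the map J : c₀ → C(K,X) defined by J((α_n)_{n∈ℕ}) = Σ_{n=1}^∞ α_n f_n is a well-defined linear isometric embedding of c₀ into C(K,X), and its range, the closed linear span of { f_n : n ∈ ℕ }, is complemented in C(K,X) (it is the range of a continuous linear projection on C(K,X)). -/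
open Filter Topology

theorem isometric_c0_copy_complemented
    (K : Type*) [TopologicalSpace K] [CompactSpace K] [T2Space K]
    (X : Type*) [NormedAddCommGroup X] [NormedSpace ℝ X] [CompleteSpace X]
    (V : ℕ → Set K) (hVclopen : ∀ n, IsClopen (V n)) (hVdisj : Pairwise (Function.onFun Disjoint V))
    (f : ℕ → C(K, X)) (hnorm : ∀ n, ‖f n‖ = 1)
    (hsupp : ∀ n, ∀ k ∉ V n, f n k = 0)
    (t : ℕ → K) (ht : ∀ n, t n ∈ V n) (hft : ∀ n, ‖f n (t n)‖ = 1)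
    (tinf : K) (htend : Tendsto t atTop (𝓝 tinf)) (htinf : tinf ∉ ⋃ n, V n) :
    ∃ J : ZeroAtInftyContinuousMap ℕ ℝ →L[ℝ] C(K, X),
      Isometry J ∧
      (∀ α : ZeroAtInftyContinuousMap ℕ ℝ, HasSum (fun n => α n • f n) (J α)) ∧
      LinearMap.range (J : ZeroAtInftyContinuousMap ℕ ℝ →ₗ[ℝ] C(K, X)) = (Submodule.span ℝ (Set.range f)).topologicalClosure ∧
      ((Submodule.span ℝ (Set.range f)).topologicalClosure).ClosedComplemented := by
  classical
  -- f n vanishes on V m for m ≠ n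
  have hvanish : ∀ {m n : ℕ}, m ≠ n → ∀ k ∈ V m, f n k = 0 := by
    intro m n hmn k hk
    refine hsupp n k fun hk' => ?_
    exact (hVdisj hmn).le_bot ⟨hk, hk'⟩ |>.elim
  have htinf' : ∀ n, f n tinf = 0 := fun n =>
    hsupp n tinf fun h => htinf (Set.mem_iUnion.mpr ⟨n, h⟩)
  -- key finite-sum bound
  have key : ∀ (a : ℕ → ℝ) (s : Finset ℕ) (C : ℝ), 0 ≤ C → (∀ n ∈ s, ‖a n‖ ≤ C) →
      ‖∑ n ∈ s, a n • f n‖ ≤ C := by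
    intro a s C hC ha
    refine (ContinuousMap.norm_le _ hC).mpr fun k => ?_
    have hsum : (∑ n ∈ s, a n • f n) k = ∑ n ∈ s, a n • f n k := by
      simp
    rw [hsum]
    by_cases hex : ∃ m ∈ s, k ∈ V m
    · obtain ⟨m, hm, hkm⟩ := hex
      rw [Finset.sum_eq_single_of_mem m hm (fun n _ hne => by
        rw [hvanish (Ne.symm hne) k hkm, smul_zero])]
      calc ‖a m • f m k‖ = ‖a m‖ * ‖f m k‖ := norm_smul _ _
        _ ≤ C * 1 := by
            refine mul_le_mul (ha m hm) ?_ (norm_nonneg _) hC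
            simpa [hnorm m] using (f m).norm_coe_le_norm k
        _ = C := mul_one C
    · push_neg at hex
      rw [Finset.sum_eq_zero fun n hn => by rw [hsupp n k (hex n hn), smul_zero]]
      simpa using hC
  -- coefficients are bounded by the norm
  have hcoe_le : ∀ (α : ZeroAtInftyContinuousMap ℕ ℝ) (n : ℕ), ‖α n‖ ≤ ‖α‖ := by
    intro α n
    have := α.toBCF.norm_coe_le_norm n
    rwa [ZeroAtInftyContinuousMap.norm_toBCF_eq_norm] at this
  have hα_tendsto : ∀ α : ZeroAtInftyContinuousMap ℕ ℝ,
      Tendsto (fun n => α n) atTop (𝓝 0) := by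
    intro α
    have := α.zero_at_infty'
    rwa [cocompact_eq_atTop] at this
  -- summability
  have hsummable : ∀ α : ZeroAtInftyContinuousMap ℕ ℝ, Summable (fun n => α n • f n) := by
    intro α
    rw [summable_iff_vanishing]
    intro e he
    obtain ⟨ε, hε, hball⟩ := Metric.mem_nhds_iff.mp he
    obtain ⟨N, hN⟩ := (Metric.tendsto_atTop.mp (hα_tendsto α)) (ε/2) (half_pos hε)
    refine ⟨Finset.range N, fun s hs => ?_⟩
    apply hball
    rw [Metric.mem_ball, dist_zero_right]
    refine lt_of_le_of_lt (key _ s (ε/2) (le_of_lt (half_pos hε)) fun n hn => ?_)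
      (half_lt_self hε)
    have hnN : N ≤ n := by
      by_contra h
      exact (Finset.disjoint_left.mp hs hn) (Finset.mem_range.mpr (lt_of_not_ge h))
    have := hN n hnN
    rw [dist_zero_right] at this
    exact le_of_lt this
  set Jfun : ZeroAtInftyContinuousMap ℕ ℝ → C(K, X) := fun α => ∑' n, α n • f n with hJfun
  have hJsum : ∀ α, HasSum (fun n => α n • f n) (Jfun α) := fun α => (hsummable α).hasSum
  -- pointwise evaluation
  have heval : ∀ (α : ZeroAtInftyContinuousMap ℕ ℝ) (k : K),
      HasSum (fun n => α n • f n k) (Jfun α k) := by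
    intro α k
    exact (hJsum α).mapL (ContinuousMap.evalCLM ℝ k)
  have heval_t : ∀ (α : ZeroAtInftyContinuousMap ℕ ℝ) (m : ℕ),
      Jfun α (t m) = α m • f m (t m) := by
    intro α m
    refine (heval α (t m)).unique (hasSum_single m fun n hn => ?_)
    rw [hvanish hn.symm (t m) (ht m), smul_zero]
  -- norm identity
  have hnorm_eq : ∀ α, ‖Jfun α‖ = ‖α‖ := by
    intro α
    apply le_antisymm
    · refine le_of_tendsto' ((hJsum α).norm) fun s => ?_
      exact key _ s ‖α‖ (norm_nonneg α) fun n _ => hcoe_le α n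
    · rw [← ZeroAtInftyContinuousMap.norm_toBCF_eq_norm]
      refine (BoundedContinuousFunction.norm_le (norm_nonneg _)).mpr fun n => ?_
      calc ‖α.toBCF n‖ = ‖α n‖ * ‖f n (t n)‖ := by rw [hft n, mul_one]; rfl
        _ = ‖α n • f n (t n)‖ := (norm_smul _ _).symm
        _ = ‖Jfun α (t n)‖ := by rw [heval_t α n]
        _ ≤ ‖Jfun α‖ := (Jfun α).norm_coe_le_norm (t n)
  -- linearity
  have hadd : ∀ α β, Jfun (α + β) = Jfun α + Jfun β := by
    intro α β
    refine ((hJsum (α + β)).unique ?_)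
    have := (hJsum α).add (hJsum β)
    refine this.congr_fun fun n => ?_
    show (α + β) n • f n = α n • f n + β n • f n
    rw [ZeroAtInftyContinuousMap.coe_add, Pi.add_apply, add_smul]
  have hsmul : ∀ (c : ℝ) α, Jfun (c • α) = c • Jfun α := by
    intro c α
    refine ((hJsum (c • α)).unique ?_)
    have := (hJsum α).const_smul c
    refine this.congr_fun fun n => ?_
    show (c • α) n • f n = c • (α n • f n)
    rw [ZeroAtInftyContinuousMap.coe_smul, Pi.smul_apply, smul_smul, smul_eq_mul]
  set Jlin : ZeroAtInftyContinuousMap ℕ ℝ →ₗ[ℝ] C(K, X) :=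
    { toFun := Jfun, map_add' := hadd, map_smul' := hsmul } with hJlin
  have hisom : Isometry Jlin := AddMonoidHomClass.isometry_of_norm Jlin hnorm_eq
  set J : ZeroAtInftyContinuousMap ℕ ℝ →L[ℝ] C(K, X) :=
    { toLinearMap := Jlin, cont := hisom.continuous } with hJ
  have hJapp : ∀ α, J α = Jfun α := fun α => rfl
  -- basis vectors
  have hsingle_co : ∀ m : ℕ, Tendsto (Pi.single m (1:ℝ)) (cocompact ℕ) (𝓝 0) := by
    intro m
    rw [cocompact_eq_atTop]
    refine Tendsto.congr' ?_ tendsto_const_nhds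
    filter_upwards [eventually_gt_atTop m] with n hn
    simp [Pi.single_apply, Nat.ne_of_gt hn]
  set e : ℕ → ZeroAtInftyContinuousMap ℕ ℝ := fun m =>
    ⟨⟨Pi.single m 1, continuous_of_discreteTopology⟩, hsingle_co m⟩ with he
  have hJe : ∀ m, J (e m) = f m := by
    intro m
    rw [hJapp]
    refine ((hJsum (e m)).unique ?_)
    have hen : ∀ m n, (e m) n = (Pi.single m 1 : ℕ → ℝ) n := fun m n => rfl
    have h1 : ∀ n ≠ m, (e m) n • f n = 0 := by
      intro n hn
      rw [hen, Pi.single_eq_of_ne hn, zero_smul]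
    have := hasSum_single (f := fun n => (e m) n • f n) m h1
    simpa [hen, Pi.single_eq_same] using this
  -- range
  have hrange_closed : IsClosed (Set.range J) :=
    (hisom.isClosedEmbedding).isClosed_range
  have hspan_le : Submodule.span ℝ (Set.range f) ≤ LinearMap.range (J : ZeroAtInftyContinuousMap ℕ ℝ →ₗ[ℝ] C(K, X)) := by
    rw [Submodule.span_le]
    rintro - ⟨m, rfl⟩
    exact ⟨e m, hJe m⟩
  have hrange : LinearMap.range (J : ZeroAtInftyContinuousMap ℕ ℝ →ₗ[ℝ] C(K, X)) = (Submodule.span ℝ (Set.range f)).topologicalClosure := by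
    apply le_antisymm
    · rintro - ⟨α, rfl⟩
      have : Tendsto (fun s : Finset ℕ => ∑ n ∈ s, α n • f n) atTop (𝓝 (J α)) := hJsum α
      refine mem_closure_of_tendsto this (Eventually.of_forall fun s => ?_)
      exact Submodule.sum_mem _ fun n _ =>
        Submodule.smul_mem _ _ (Submodule.subset_span ⟨n, rfl⟩)
    · exact Submodule.topologicalClosure_minimal _ hspan_le hrange_closed
  -- dual functionals
  have hftne : ∀ n, f n (t n) ≠ 0 := by
    intro n h
    have := hft n
    rw [h, norm_zero] at this
    norm_num at this
  choose φ hφ1 hφ2 using fun n => exists_dual_vector ℝ (f n (t n)) (norm_ne_zero_iff.mpr (hftne n))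
  -- projection coefficient map
  have hΦco : ∀ g : C(K, X),
      Tendsto (fun n => φ n (g (t n) - g tinf)) (cocompact ℕ) (𝓝 0) := by
    intro g
    rw [cocompact_eq_atTop]
    have hg : Tendsto (fun n => g (t n) - g tinf) atTop (𝓝 0) := by
      have := (g.continuous.tendsto tinf).comp htend
      simpa using this.sub_const (g tinf)
    refine squeeze_zero_norm (fun n => ?_) (by simpa using hg.norm)
    calc ‖φ n (g (t n) - g tinf)‖ ≤ ‖φ n‖ * ‖g (t n) - g tinf‖ :=
          (φ n).le_opNorm _
      _ = ‖g (t n) - g tinf‖ := by rw [hφ1 n, one_mul]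
  set Φfun : C(K, X) → ZeroAtInftyContinuousMap ℕ ℝ := fun g =>
    ⟨⟨fun n => φ n (g (t n) - g tinf), continuous_of_discreteTopology⟩, hΦco g⟩ with hΦfun
  set Φlin : C(K, X) →ₗ[ℝ] ZeroAtInftyContinuousMap ℕ ℝ :=
    { toFun := Φfun
      map_add' := by
        intro g h
        ext n
        show φ n ((g + h) (t n) - (g + h) tinf) = φ n (g (t n) - g tinf) + φ n (h (t n) - h tinf)
        rw [← map_add]
        congr 1
        simp
        abel
      map_smul' := by
        intro c g
        ext n
        show φ n ((c • g) (t n) - (c • g) tinf) = c • φ n (g (t n) - g tinf)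
        rw [← map_smul]
        congr 1
        simp [smul_sub] } with hΦlin
  have hΦbound : ∀ g, ‖Φlin g‖ ≤ 2 * ‖g‖ := by
    intro g
    rw [← ZeroAtInftyContinuousMap.norm_toBCF_eq_norm]
    refine (BoundedContinuousFunction.norm_le (by positivity)).mpr fun n => ?_
    calc ‖(Φlin g).toBCF n‖ = ‖φ n (g (t n) - g tinf)‖ := rfl
      _ ≤ ‖φ n‖ * ‖g (t n) - g tinf‖ := (φ n).le_opNorm _
      _ = ‖g (t n) - g tinf‖ := by rw [hφ1 n, one_mul]
      _ ≤ ‖g (t n)‖ + ‖g tinf‖ := norm_sub_le _ _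
      _ ≤ ‖g‖ + ‖g‖ := add_le_add (g.norm_coe_le_norm _) (g.norm_coe_le_norm _)
      _ = 2 * ‖g‖ := by ring
  set Φ : C(K, X) →L[ℝ] ZeroAtInftyContinuousMap ℕ ℝ :=
    LinearMap.mkContinuous Φlin 2 hΦbound with hΦ
  have hΦf : ∀ m, Φ (f m) = e m := by
    intro m
    ext n
    have h1 : (Φ (f m)) n = φ n (f m (t n) - f m tinf) := rfl
    have h2 : (e m) n = (Pi.single m 1 : ℕ → ℝ) n := rfl
    rw [h1, h2, htinf' m, sub_zero]
    by_cases h : n = m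
    · subst h
      rw [Pi.single_eq_same, hφ2 n, hft n]
      norm_num
    · rw [hvanish h (t n) (ht n), map_zero, Pi.single_eq_of_ne h]
  set P : C(K, X) →L[ℝ] C(K, X) := J.comp Φ with hP
  have hPf : ∀ m, P (f m) = f m := by
    intro m
    show J (Φ (f m)) = f m
    rw [hΦf m, hJe m]
  have hPfix : ∀ x ∈ (Submodule.span ℝ (Set.range f)).topologicalClosure, P x = x := by
    have heqon : Set.EqOn P id (Submodule.span ℝ (Set.range f) : Set C(K, X)) := by
      intro x hx
      induction hx using Submodule.span_induction with
      | mem x hx => obtain ⟨m, rfl⟩ := hx; exact hPf m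
      | zero => simp
      | add x y _ _ hx hy => simp only [map_add, hx, hy]; rfl
      | smul c x _ hx => simp only [map_smul, hx]; rfl
    have := heqon.closure P.continuous continuous_id
    intro x hx
    exact this hx
  have hPmem : ∀ g, P g ∈ (Submodule.span ℝ (Set.range f)).topologicalClosure := by
    intro g
    rw [← hrange]
    exact ⟨Φ g, rfl⟩
  refine ⟨J, hisom, fun α => hJsum α, hrange, ?_⟩
  refine ⟨P.codRestrict _ hPmem, fun x => ?_⟩
  apply Subtype.ext
  rw [ContinuousLinearMap.coe_codRestrict_apply]
  exact hPfix x x.2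
end

section
/- Let X be a real Banach space, let P : X → X be a continuous linear projection (P ∘ P = P), and let M be a closed subspace of X such that M ∩ ker P = {0} and P(M) is closed. Then the restriction of P to M is an isomorphism onto P(M); moreover, if N is a closed subspace of M and H is a closed subspace of the range of P such that range(P) = P(N) ⊕ H (a topological direct sum), then X = N ⊕ P⁻¹(H) (a topological direct sum); in particular, N is complemented in X. -/
theorem projection_isomorphism_and_complement
    (X : Type*) [NormedAddCommGroup X] [NormedSpace ℝ X] [CompleteSpace X]
    (P : X →L[ℝ] X) (hP : ∀ x, P (P x) = P x)
    (M : Submodule ℝ X) (hMclosed : IsClosed (M : Set X))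
    (hMker : M ⊓ LinearMap.ker (P : X →ₗ[ℝ] X) = ⊥)
    (hPMclosed : IsClosed ((Submodule.map (P : X →ₗ[ℝ] X) M : Submodule ℝ X) : Set X)) :
    (∃ e : M ≃L[ℝ] (Submodule.map (P : X →ₗ[ℝ] X) M : Submodule ℝ X), ∀ x : M, (e x : X) = P x) ∧
    ∀ N : Submodule ℝ X, N ≤ M → IsClosed (N : Set X) →
      ∀ H : Submodule ℝ X, H ≤ LinearMap.range (P : X →ₗ[ℝ] X) → IsClosed (H : Set X) →
        Submodule.map (P : X →ₗ[ℝ] X) N ⊓ H = ⊥ → Submodule.map (P : X →ₗ[ℝ] X) N ⊔ H = LinearMap.range (P : X →ₗ[ℝ] X) →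
          IsCompl N (Submodule.comap (P : X →ₗ[ℝ] X) H) ∧ N.ClosedComplemented := by
  have hMX : ∀ x : X, x ∈ M → P x = 0 → x = 0 := by
    intro x hx hPx
    have : x ∈ M ⊓ LinearMap.ker (P : X →ₗ[ℝ] X) := ⟨hx, hPx⟩
    rw [hMker] at this
    exact this
  constructor
  · haveI : CompleteSpace M := hMclosed.completeSpace_coe
    haveI : CompleteSpace (Submodule.map (P : X →ₗ[ℝ] X) M : Submodule ℝ X) := hPMclosed.completeSpace_coe
    set f : M →L[ℝ] (Submodule.map (P : X →ₗ[ℝ] X) M : Submodule ℝ X) :=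
      (P.comp M.subtypeL).codRestrict (Submodule.map (P : X →ₗ[ℝ] X) M)
        (fun x => ⟨x, x.2, rfl⟩) with hf
    have hinj : LinearMap.ker (f : M →ₗ[ℝ] (Submodule.map (P : X →ₗ[ℝ] X) M : Submodule ℝ X)) = ⊥ := by
      rw [LinearMap.ker_eq_bot']
      intro m hm
      have : P (m : X) = 0 := congrArg Subtype.val hm
      exact Subtype.ext (hMX m m.2 this)
    have hsurj : LinearMap.range (f : M →ₗ[ℝ] (Submodule.map (P : X →ₗ[ℝ] X) M : Submodule ℝ X)) = ⊤ := by
      rw [LinearMap.range_eq_top]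
      rintro ⟨y, x, hx, rfl⟩
      exact ⟨⟨x, hx⟩, rfl⟩
    exact ⟨ContinuousLinearEquiv.ofBijective f hinj hsurj, fun x => rfl⟩
  · intro N hNM hNclosed H hHrange hHclosed hdisj hsup
    have hcompl : IsCompl N (Submodule.comap (P : X →ₗ[ℝ] X) H) := by
      constructor
      · rw [disjoint_iff]
        ext x
        simp only [Submodule.mem_inf, Submodule.mem_comap, Submodule.mem_bot]
        constructor
        · rintro ⟨hxN, hxH⟩
          have : P x ∈ Submodule.map (P : X →ₗ[ℝ] X) N ⊓ H := ⟨⟨x, hxN, rfl⟩, hxH⟩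
          rw [hdisj] at this
          exact hMX x (hNM hxN) this
        · rintro rfl; simp
      · rw [codisjoint_iff, eq_top_iff]
        intro x _
        have hPx : P x ∈ Submodule.map (P : X →ₗ[ℝ] X) N ⊔ H := by
          rw [hsup]; exact ⟨x, rfl⟩
        obtain ⟨y, ⟨n, hn, rfl⟩, h, hh, hxy⟩ := Submodule.mem_sup.1 hPx
        refine Submodule.mem_sup.2 ⟨n, hn, x - n, ?_, by abel⟩
        have : P (x - n) = h := by
          rw [map_sub]; rw [← hxy]; simp
        simpa [Submodule.mem_comap, this] using hh
    refine ⟨hcompl, Submodule.ClosedComplemented.of_isCompl_isClosed hcompl hNclosed ?_⟩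
    exact hHclosed.preimage P.continuous
end

section
/- Let λ be a limit ordinal, let K be a compact Hausdorff space that is sequentially compact, let φ : K → [0,λ] be a continuous surjection, where [0,λ] is the set of ordinals at most λ with the order topology, and let X be a real Banach space. For each ordinal μ < λ, let P_μ : C(K,X) → C(K,X) be the continuous linear projection P_μ(f) = f·χ_{φ⁻¹([0,μ])} (the pointwise product of f with the indicator function of the clopen set φ⁻¹([0,μ])). Let M be a closed infinite-dimensional subspace of { g ∘ φ : g ∈ C([0,λ],X), g(λ) = 0 } such that, for every μ < λ, the restriction of P_μ to M is strictly singular, i.e., there is no infinite-dimensional closed subspace of M on which P_μ is bounded below. Then M contains an infinite-dimensional closed subspace that is isomorphic to c₀ and complemented in C(K,X). -/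
/-- The subspace `{ g ∘ φ : g ∈ C([0,l], X), g(l) = 0 }` of `C(K, X)`. -/
def compSubmodule0 {K : Type*} [TopologicalSpace K] {l : Ordinal}
    (X : Type*) [NormedAddCommGroup X] [NormedSpace ℝ X] (φ : C(K, Set.Iic l)) :
    Submodule ℝ C(K, X) where
  carrier := { f | ∃ g : C(Set.Iic l, X), f = g.comp φ ∧ g ⟨l, Set.mem_Iic.mpr le_rfl⟩ = 0 }
  add_mem' := by
    rintro f₁ f₂ ⟨g₁, rfl, h₁⟩ ⟨g₂, rfl, h₂⟩
    exact ⟨g₁ + g₂, by ext k; simp, by simp [h₁, h₂]⟩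
  zero_mem' := ⟨0, by ext k; simp, rfl⟩
  smul_mem' := by
    rintro c f ⟨g, rfl, h⟩
    exact ⟨c • g, by ext k; simp, by simp [h]⟩

open scoped Classical in
/-- Multiplication by the characteristic function of a clopen set, as a map on `C(K, X)`. -/
noncomputable def restrictClopen {K : Type*} [TopologicalSpace K]
    {X : Type*} [NormedAddCommGroup X]
    (U : Set K) (hU : IsClopen U) (f : C(K, X)) : C(K, X) :=
  ⟨U.piecewise f 0, f.continuous.piecewise
    (fun a ha => by rw [hU.frontier_eq] at ha; exact absurd ha (Set.notMem_empty a))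
    continuous_const⟩

/-- `{x ∈ [0,l] : x ≤ μ}` is clopen in `[0,l]`. -/
theorem isClopen_Iic_in_Iic (l μ : Ordinal) :
    IsClopen {x : Set.Iic l | (x : Ordinal) ≤ μ} := by
  constructor
  · exact isClosed_Iic.preimage continuous_subtype_val
  · have : {x : Set.Iic l | (x : Ordinal) ≤ μ} = Subtype.val ⁻¹' Set.Iio (Order.succ μ) := by
      ext x; simp [Order.lt_succ_iff]
    rw [this]
    exact isOpen_Iio.preimage continuous_subtype_val

/-- The projection `P_μ : C(K,X) → C(K,X)`, `P_μ(f) = f · χ_{φ⁻¹([0,μ])}`. -/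
noncomputable def Pmu {K : Type*} [TopologicalSpace K] {l : Ordinal}
    {X : Type*} [NormedAddCommGroup X] (φ : C(K, Set.Iic l)) (μ : Ordinal)
    (f : C(K, X)) : C(K, X) :=
  restrictClopen {k | ((φ k : Ordinal)) ≤ μ}
    ((isClopen_Iic_in_Iic l μ).preimage φ.continuous) f

/-! ### Auxiliary lemmas -/

open Filter Topology
open scoped Classical NNReal

section PmuLemmas

variable {K : Type*} [TopologicalSpace K] {l : Ordinal}
  {X : Type*} [NormedAddCommGroup X] [NormedSpace ℝ X]

theorem Pmu_apply_of_le (φ : C(K, Set.Iic l)) (μ : Ordinal) (f : C(K, X)) {k : K}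
    (h : (φ k : Ordinal) ≤ μ) : Pmu φ μ f k = f k := by
  simp only [Pmu, restrictClopen, ContinuousMap.coe_mk]
  exact Set.piecewise_eq_of_mem {k | ((φ k : Ordinal)) ≤ μ} (⇑f) 0 h

theorem Pmu_apply_of_not_le (φ : C(K, Set.Iic l)) (μ : Ordinal) (f : C(K, X)) {k : K}
    (h : ¬ (φ k : Ordinal) ≤ μ) : Pmu φ μ f k = 0 := by
  simp only [Pmu, restrictClopen, ContinuousMap.coe_mk]
  exact (Set.piecewise_eq_of_notMem {k | ((φ k : Ordinal)) ≤ μ} (⇑f) 0 h).trans rfl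

theorem Pmu_smul (φ : C(K, Set.Iic l)) (μ : Ordinal) (c : ℝ) (f : C(K, X)) :
    Pmu φ μ (c • f) = c • Pmu φ μ f := by
  ext k
  by_cases h : (φ k : Ordinal) ≤ μ
  · rw [ContinuousMap.smul_apply, Pmu_apply_of_le _ _ _ h, Pmu_apply_of_le _ _ _ h]; rfl
  · rw [ContinuousMap.smul_apply, Pmu_apply_of_not_le _ _ _ h, Pmu_apply_of_not_le _ _ _ h,
      smul_zero]

end PmuLemmas

section C0Lemmas

/-- Build an element of `C₀(ℕ, ℝ)` from a null sequence. -/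
noncomputable def c0mk (a : ℕ → ℝ) (h : Tendsto a atTop (𝓝 0)) : ZeroAtInftyContinuousMap ℕ ℝ :=
  ⟨⟨a, continuous_of_discreteTopology⟩, by rwa [cocompact_eq_atTop]⟩

theorem c0mk_apply (a : ℕ → ℝ) (h) (n : ℕ) : c0mk a h n = a n := rfl

theorem c0_apply_le_norm (a : ZeroAtInftyContinuousMap ℕ ℝ) (n : ℕ) : ‖a n‖ ≤ ‖a‖ := by
  rw [← ZeroAtInftyContinuousMap.norm_toBCF_eq_norm]
  exact BoundedContinuousFunction.norm_coe_le_norm a.toBCF n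

theorem c0_norm_le (a : ZeroAtInftyContinuousMap ℕ ℝ) (C : ℝ) (hC : 0 ≤ C)
    (h : ∀ n, ‖a n‖ ≤ C) : ‖a‖ ≤ C := by
  rw [← ZeroAtInftyContinuousMap.norm_toBCF_eq_norm]
  exact BoundedContinuousFunction.norm_le hC |>.mpr h

theorem c0_tendsto (a : ZeroAtInftyContinuousMap ℕ ℝ) : Tendsto (fun n => a n) atTop (𝓝 0) := by
  have h := a.zero_at_infty'
  rwa [cocompact_eq_atTop] at h

/-- The `m`-th standard basis vector of `c₀`. -/
noncomputable def c0delta (m : ℕ) : ZeroAtInftyContinuousMap ℕ ℝ :=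
  c0mk (Pi.single m 1) (by
    apply tendsto_nhds_of_eventually_eq
    filter_upwards [eventually_gt_atTop m] with n hn
    exact Pi.single_eq_of_ne (Nat.ne_of_gt hn) 1)

theorem c0delta_apply (m n : ℕ) : c0delta m n = (Pi.single m (1:ℝ) : ℕ → ℝ) n := rfl

/-- Evaluation at a point, as a linear map on `c₀`. -/
def c0ev (n : ℕ) : ZeroAtInftyContinuousMap ℕ ℝ →ₗ[ℝ] ℝ where
  toFun f := f n
  map_add' f g := by simp [ZeroAtInftyContinuousMap.coe_add]
  map_smul' c f := by simp [ZeroAtInftyContinuousMap.coe_smul]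

theorem c0_not_finiteDimensional : ¬ FiniteDimensional ℝ (ZeroAtInftyContinuousMap ℕ ℝ) := by
  intro h
  refine Module.Finite.not_linearIndependent_of_infinite (R := ℝ) c0delta ?_
  rw [linearIndependent_iff']
  intro s g hg i hi
  have h2 := congrArg (c0ev i) hg
  rw [map_sum, map_zero, Finset.sum_eq_single_of_mem i hi] at h2
  · simpa [c0ev, c0delta_apply] using h2
  · intro j _ hj
    rw [map_smul]
    simp [c0ev, c0delta_apply, Pi.single_eq_of_ne (Ne.symm hj)]

end C0Lemmas

set_option maxHeartbeats 1600000 in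
theorem c0_subspace_of_strictly_singular_projections
    (l : Ordinal) (hl : Order.IsSuccLimit l)
    (K : Type*) [TopologicalSpace K] [CompactSpace K] [T2Space K] [SeqCompactSpace K]
    (φ : C(K, Set.Iic l)) (hφ : Function.Surjective φ)
    (X : Type*) [NormedAddCommGroup X] [NormedSpace ℝ X] [CompleteSpace X]
    (M : Submodule ℝ C(K, X)) (hMclosed : IsClosed (M : Set C(K, X)))
    (hMinf : ¬ FiniteDimensional ℝ M) (hMZ : M ≤ compSubmodule0 X φ)
    (hss : ∀ μ < l, ¬ ∃ N : Submodule ℝ C(K, X), N ≤ M ∧ IsClosed (N : Set C(K, X)) ∧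
      ¬ FiniteDimensional ℝ N ∧ ∃ c > 0, ∀ f ∈ N, c * ‖f‖ ≤ ‖Pmu φ μ f‖) :
    ∃ N : Submodule ℝ C(K, X), N ≤ M ∧ IsClosed (N : Set C(K, X)) ∧
      ¬ FiniteDimensional ℝ N ∧
      Nonempty (N ≃L[ℝ] ZeroAtInftyContinuousMap ℕ ℝ) ∧
      N.ClosedComplemented := by
  classical
  -- ### Step 1: the elementary extraction step
  have key : ∀ μ, μ < l → ∀ c : ℝ, 0 < c → ∃ f ∈ M, ‖Pmu φ μ f‖ < c * ‖f‖ := by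
    intro μ hμ c hc
    by_contra hcon
    push_neg at hcon
    exact hss μ hμ ⟨M, le_rfl, hMclosed, hMinf, c, hc, fun f hf => hcon f hf⟩
  have keynorm : ∀ μ, μ < l → ∀ ε : ℝ, 0 < ε → ∃ f ∈ M, ‖f‖ = 1 ∧ ‖Pmu φ μ f‖ ≤ ε := by
    intro μ hμ ε hε
    obtain ⟨f, hfM, hf⟩ := key μ hμ ε hε
    have hf0 : f ≠ 0 := by
      rintro rfl
      rw [norm_zero, mul_zero] at hf
      exact absurd hf (not_lt.mpr (norm_nonneg _))
    have hfn : (0:ℝ) < ‖f‖ := norm_pos_iff.mpr hf0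
    refine ⟨‖f‖⁻¹ • f, M.smul_mem _ hfM, ?_, ?_⟩
    · rw [norm_smul, norm_inv, norm_norm, inv_mul_cancel₀ hfn.ne']
    · rw [Pmu_smul, norm_smul, norm_inv, norm_norm]
      rw [inv_mul_le_iff₀ hfn]
      exact le_of_lt (lt_of_lt_of_le hf (le_of_eq (mul_comm _ _)))
  have tail : ∀ f ∈ M, ∀ ε : ℝ, 0 < ε → ∀ ν₀, ν₀ < l →
      ∃ ν', (ν₀ < ν' ∧ ν' < l) ∧ ‖f - Pmu φ ν' f‖ ≤ ε := by
    intro f hfM ε hε ν₀ hν₀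
    obtain ⟨g, rfl, hg0⟩ := hMZ hfM
    set top : Set.Iic l := ⟨l, Set.mem_Iic.mpr le_rfl⟩
    have hopen : IsOpen {x : Set.Iic l | ‖g x‖ < ε} :=
      isOpen_lt (continuous_norm.comp g.continuous) continuous_const
    have hmem : {x : Set.Iic l | ‖g x‖ < ε} ∈ 𝓝 top := by
      refine hopen.mem_nhds ?_
      simp only [Set.mem_setOf_eq, hg0, norm_zero]
      exact hε
    have hbot : ∃ y : Set.Iic l, y < top := by
      refine ⟨⟨0, Set.mem_Iic.mpr hl.pos.le⟩, ?_⟩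
      exact Subtype.mk_lt_mk.mpr hl.pos
    obtain ⟨ν₁, hν₁top, hν₁sub⟩ := exists_Ioc_subset_of_mem_nhds hmem hbot
    refine ⟨max ((ν₁ : Ordinal)) (Order.succ ν₀), ⟨?_, ?_⟩, ?_⟩
    · exact lt_of_lt_of_le (Order.lt_succ ν₀) (le_max_right _ _)
    · exact max_lt (lt_of_lt_of_le (Subtype.mk_lt_mk.mp hν₁top) le_rfl) (hl.succ_lt hν₀)
    · set ν' := max ((ν₁ : Ordinal)) (Order.succ ν₀)
      rw [ContinuousMap.norm_le _ hε.le]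
      intro x
      by_cases hx : (φ x : Ordinal) ≤ ν'
      · rw [ContinuousMap.sub_apply, Pmu_apply_of_le _ _ _ hx, sub_self, norm_zero]
        exact hε.le
      · rw [ContinuousMap.sub_apply, Pmu_apply_of_not_le _ _ _ hx, sub_zero]
        have h1 : (ν₁ : Ordinal) < (φ x : Ordinal) :=
          lt_of_le_of_lt (le_max_left _ _) (not_le.mp hx)
        have h2 : φ x ∈ Set.Ioc ν₁ top := by
          constructor
          · exact Subtype.mk_lt_mk.mpr h1
          · exact Subtype.mk_le_mk.mpr (Set.mem_Iic.mp (φ x).2)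
        exact (hν₁sub h2).le
  -- the combined step
  have step : ∀ ν₀, ν₀ < l → ∀ ε : ℝ, 0 < ε →
      ∃ f, (f ∈ M ∧ ‖f‖ = 1 ∧ ‖Pmu φ ν₀ f‖ ≤ ε) ∧
        ∃ ν', (ν₀ < ν' ∧ ν' < l) ∧ ‖f - Pmu φ ν' f‖ ≤ ε := by
    intro ν₀ hν₀ ε hε
    obtain ⟨f, hfM, hf1, hfP⟩ := keynorm ν₀ hν₀ ε hε
    obtain ⟨ν', hν', htail⟩ := tail f hfM ε hε ν₀ hν₀
    exact ⟨f, ⟨hfM, hf1, hfP⟩, ν', hν', htail⟩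
  choose fc hfc νc hνc htailc using step
  -- ### Step 2: the recursively constructed sequences
  set eps : ℕ → ℝ := fun n => ((1:ℝ)/2)^(n+4) with heps
  have hepspos : ∀ n, (0:ℝ) < eps n := fun n => by positivity
  let νseq : ℕ → {x : Ordinal // x < l} := fun n => Nat.rec
    ⟨0, hl.pos⟩
    (fun m p => ⟨νc p.1 p.2 (eps m) (hepspos m), (hνc p.1 p.2 (eps m) (hepspos m)).2⟩) n
  set ν : ℕ → Ordinal := fun n => (νseq n).1 with hν
  have hνl : ∀ n, ν n < l := fun n => (νseq n).2
  set F : ℕ → C(K, X) := fun n => fc (ν n) (hνl n) (eps n) (hepspos n) with hF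
  have hFM : ∀ n, F n ∈ M := fun n => (hfc (ν n) (hνl n) (eps n) (hepspos n)).1
  have hFnorm : ∀ n, ‖F n‖ = 1 := fun n => (hfc (ν n) (hνl n) (eps n) (hepspos n)).2.1
  have hFP : ∀ n, ‖Pmu φ (ν n) (F n)‖ ≤ eps n :=
    fun n => (hfc (ν n) (hνl n) (eps n) (hepspos n)).2.2
  have hνsucc : ∀ n, ν (n+1) = νc (ν n) (hνl n) (eps n) (hepspos n) := fun n => rfl
  have hνmono : ∀ n, ν n < ν (n+1) := by
    intro n
    rw [hνsucc n]
    exact (hνc (ν n) (hνl n) (eps n) (hepspos n)).1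
  have hmono : StrictMono ν := strictMono_nat_of_lt_succ hνmono
  have hFtail : ∀ n, ‖F n - Pmu φ (ν (n+1)) (F n)‖ ≤ eps n := by
    intro n
    rw [hνsucc n]
    exact htailc (ν n) (hνl n) (eps n) (hepspos n)
  -- ### Step 3: blocks, norming points, subsequence, functionals
  haveI : Nonempty K := ⟨(hφ ⟨0, Set.mem_Iic.mpr hl.pos.le⟩).choose⟩
  have hkmax : ∀ n, ∃ k : K, ‖F n k‖ = 1 := by
    intro n
    obtain ⟨k, -, hk⟩ := isCompact_univ.exists_isMaxOn Set.univ_nonempty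
      ((continuous_norm.comp (F n).continuous).continuousOn)
    have h1 : ‖F n‖ ≤ ‖F n k‖ :=
      (ContinuousMap.norm_le _ (norm_nonneg _)).mpr (fun x => hk (Set.mem_univ x))
    refine ⟨k, le_antisymm ?_ ?_⟩
    · rw [← hFnorm n]; exact (F n).norm_coe_le_norm k
    · rw [← hFnorm n]; exact h1
  choose kp hkp using hkmax
  have heps1 : ∀ n, eps n < 1 := by
    intro n
    rw [heps]
    exact pow_lt_one₀ (by norm_num) (by norm_num) (by omega)
  have hklo : ∀ n, ν n < (φ (kp n) : Ordinal) := by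
    intro n
    by_contra h
    push_neg at h
    have h2 := (Pmu φ (ν n) (F n)).norm_coe_le_norm (kp n)
    rw [Pmu_apply_of_le _ _ _ h, hkp n] at h2
    exact absurd (le_trans h2 (hFP n)) (not_le.mpr (heps1 n))
  have hkhi : ∀ n, (φ (kp n) : Ordinal) ≤ ν (n+1) := by
    intro n
    by_contra h
    have h2 := (F n - Pmu φ (ν (n+1)) (F n)).norm_coe_le_norm (kp n)
    rw [ContinuousMap.sub_apply, Pmu_apply_of_not_le _ _ _ h, sub_zero, hkp n] at h2
    exact absurd (le_trans h2 (hFtail n)) (not_le.mpr (heps1 n))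
  set H : ℕ → C(K, X) := fun n => Pmu φ (ν (n+1)) (F n) - Pmu φ (ν n) (F n) with hHdef
  have hHmid : ∀ n (x : K), ν n < (φ x : Ordinal) → (φ x : Ordinal) ≤ ν (n+1) →
      H n x = F n x := by
    intro n x h1 h2
    simp only [hHdef, ContinuousMap.sub_apply]
    rw [Pmu_apply_of_le _ _ _ h2, Pmu_apply_of_not_le _ _ _ (not_le.mpr h1), sub_zero]
  have hHzero : ∀ n (x : K), ¬(ν n < (φ x : Ordinal) ∧ (φ x : Ordinal) ≤ ν (n+1)) →
      H n x = 0 := by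
    intro n x h
    simp only [hHdef, ContinuousMap.sub_apply]
    by_cases h1 : (φ x : Ordinal) ≤ ν n
    · rw [Pmu_apply_of_le _ _ _ (le_trans h1 (hνmono n).le), Pmu_apply_of_le _ _ _ h1, sub_self]
    · have h2 : ¬ (φ x : Ordinal) ≤ ν (n+1) := fun h2 => h ⟨not_le.mp h1, h2⟩
      rw [Pmu_apply_of_not_le _ _ _ h2, Pmu_apply_of_not_le _ _ _ h1, sub_self]
  have hHk : ∀ n, H n (kp n) = F n (kp n) := fun n => hHmid n (kp n) (hklo n) (hkhi n)
  have hHnorm : ∀ n, ‖H n‖ ≤ 1 := by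
    intro n
    rw [ContinuousMap.norm_le _ zero_le_one]
    intro x
    by_cases hx : ν n < (φ x : Ordinal) ∧ (φ x : Ordinal) ≤ ν (n+1)
    · rw [hHmid n x hx.1 hx.2]
      exact le_trans ((F n).norm_coe_le_norm x) (le_of_eq (hFnorm n))
    · rw [hHzero n x hx, norm_zero]; exact zero_le_one
  have hFH : ∀ n, ‖F n - H n‖ ≤ eps n := by
    intro n
    rw [ContinuousMap.norm_le _ (hepspos n).le]
    intro x
    by_cases h1 : (φ x : Ordinal) ≤ ν n
    · have hx : (F n - H n) x = Pmu φ (ν n) (F n) x := by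
        rw [ContinuousMap.sub_apply, hHzero n x (fun hc => absurd h1 (not_le.mpr hc.1)),
          sub_zero, Pmu_apply_of_le _ _ _ h1]
      rw [hx]
      exact le_trans ((Pmu φ (ν n) (F n)).norm_coe_le_norm x) (hFP n)
    · by_cases h2 : (φ x : Ordinal) ≤ ν (n+1)
      · rw [ContinuousMap.sub_apply, hHmid n x (not_le.mp h1) h2, sub_self, norm_zero]
        exact (hepspos n).le
      · calc ‖(F n - H n) x‖ = ‖(F n - Pmu φ (ν (n+1)) (F n)) x‖ := by
              rw [ContinuousMap.sub_apply (F n) (H n),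
                ContinuousMap.sub_apply (F n) (Pmu φ (ν (n+1)) (F n)),
                hHzero n x (fun hc => absurd hc.2 h2), Pmu_apply_of_not_le _ _ _ h2]
        _ ≤ eps n :=
          le_trans ((F n - Pmu φ (ν (n+1)) (F n)).norm_coe_le_norm x) (hFtail n)
  have huniq : ∀ i j (x : Ordinal), ν i < x → x ≤ ν (i+1) → ν j < x → x ≤ ν (j+1) →
      i = j := by
    intro i j x hi1 hi2 hj1 hj2
    rcases lt_trichotomy i j with h | h | h
    · exact absurd (lt_of_le_of_lt (hi2.trans (hmono.monotone (Nat.succ_le_of_lt h))) hj1)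
        (lt_irrefl x)
    · exact h
    · exact absurd (lt_of_le_of_lt (hj2.trans (hmono.monotone (Nat.succ_le_of_lt h))) hi1)
        (lt_irrefl x)
  obtain ⟨kinf, σ, hσmono, hconv⟩ := SeqCompactSpace.tendsto_subseq kp
  have hφconv : Tendsto (fun n => φ (kp (σ n))) atTop (𝓝 (φ kinf)) :=
    (φ.continuous.tendsto kinf).comp hconv
  have hinf : ∀ m, ν m < (φ kinf : Ordinal) := by
    intro m
    have hle : (⟨ν (m+1), Set.mem_Iic.mpr (hνl (m+1)).le⟩ : Set.Iic l) ≤ φ kinf := by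
      refine ge_of_tendsto hφconv ?_
      filter_upwards [eventually_ge_atTop (m+1)] with n hn
      have h3 : ν (m+1) ≤ ν (σ n) := hmono.monotone (le_trans hn hσmono.le_apply)
      exact Subtype.mk_le_mk.mpr (le_trans h3 (hklo (σ n)).le)
    exact lt_of_lt_of_le (hνmono m) (Subtype.mk_le_mk.mp hle)
  have hHinf : ∀ m, H m kinf = 0 :=
    fun m => hHzero m kinf (fun hc => absurd hc.2 (not_le.mpr (hinf (m+1))))
  have hFk1 : ∀ n, F (σ n) (kp (σ n)) ≠ 0 := by
    intro n
    rw [← norm_ne_zero_iff, hkp (σ n)]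
    exact one_ne_zero
  have hdual : ∀ n, ∃ g : X →L[ℝ] ℝ, ‖g‖ = 1 ∧ g (F (σ n) (kp (σ n))) = 1 := by
    intro n
    obtain ⟨g, hg1, hg2⟩ := exists_dual_vector ℝ (F (σ n) (kp (σ n))) (norm_ne_zero_iff.mpr (hFk1 n))
    refine ⟨g, hg1, ?_⟩
    rw [hg2, hkp (σ n)]
    norm_num
  choose xs hxs1 hxs2 using hdual
  set Φf : ℕ → (C(K, X) →L[ℝ] ℝ) := fun n =>
    (xs n).comp (ContinuousMap.evalCLM ℝ (kp (σ n)) - ContinuousMap.evalCLM ℝ kinf)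
    with hΦdef
  have hΦapply : ∀ n f, Φf n f = xs n (f (kp (σ n)) - f kinf) := fun n f => rfl
  have hΦbound : ∀ n (f : C(K, X)), ‖Φf n f‖ ≤ 2 * ‖f‖ := by
    intro n f
    rw [hΦapply]
    calc ‖xs n (f (kp (σ n)) - f kinf)‖ ≤ ‖xs n‖ * ‖f (kp (σ n)) - f kinf‖ :=
          (xs n).le_opNorm _
    _ ≤ 1 * (‖f (kp (σ n))‖ + ‖f kinf‖) := by
        rw [hxs1 n]
        exact mul_le_mul_of_nonneg_left (norm_sub_le _ _) zero_le_one
    _ ≤ 1 * (‖f‖ + ‖f‖) := by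
        refine mul_le_mul_of_nonneg_left (add_le_add ?_ ?_) zero_le_one <;>
          exact f.norm_coe_le_norm _
    _ = 2 * ‖f‖ := by ring
  have hΦbio : ∀ n m, Φf n (H (σ m)) = if n = m then 1 else 0 := by
    intro n m
    rw [hΦapply, hHinf (σ m), sub_zero]
    by_cases h : n = m
    · subst h
      rw [if_pos rfl, hHk (σ n), hxs2 n]
    · rw [if_neg h]
      have hz : H (σ m) (kp (σ n)) = 0 := by
        refine hHzero (σ m) (kp (σ n)) ?_
        rintro ⟨hc1, hc2⟩
        exact h ((hσmono.injective
          (huniq (σ m) (σ n) _ hc1 hc2 (hklo (σ n)) (hkhi (σ n)))).symm)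
      rw [hz, map_zero]
  have hΦtendsto : ∀ f : C(K, X), Tendsto (fun n => Φf n f) atTop (𝓝 0) := by
    intro f
    have h1 : Tendsto (fun n => f (kp (σ n))) atTop (𝓝 (f kinf)) :=
      (f.continuous.tendsto kinf).comp hconv
    have h2 : Tendsto (fun n => ‖f (kp (σ n)) - f kinf‖) atTop (𝓝 0) :=
      tendsto_iff_norm_sub_tendsto_zero.mp h1
    refine squeeze_zero_norm (fun n => ?_) h2
    rw [hΦapply]
    calc ‖xs n (f (kp (σ n)) - f kinf)‖ ≤ ‖xs n‖ * ‖f (kp (σ n)) - f kinf‖ :=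
          (xs n).le_opNorm _
    _ = ‖f (kp (σ n)) - f kinf‖ := by rw [hxs1 n, one_mul]
  -- ### Step 4: the operators
  have hfin : ∀ (t : Finset ℕ) (c : ℕ → ℝ) (b : ℝ), 0 ≤ b → (∀ n ∈ t, ‖c n‖ ≤ b) →
      ‖∑ n ∈ t, c n • H (σ n)‖ ≤ b := by
    intro t c b hb hc
    rw [ContinuousMap.norm_le _ hb]
    intro x
    have happ : (∑ n ∈ t, c n • H (σ n)) x = ∑ n ∈ t, c n • H (σ n) x := by
      simp
    rw [happ]
    by_cases hex : ∃ n₀ ∈ t, ν (σ n₀) < (φ x : Ordinal) ∧ (φ x : Ordinal) ≤ ν (σ n₀ + 1)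
    · obtain ⟨n₀, hn₀t, hx1, hx2⟩ := hex
      have hside : ∀ m ∈ t, m ≠ n₀ → c m • H (σ m) x = 0 := by
        intro m hmt hmn
        have hz : H (σ m) x = 0 := by
          refine hHzero (σ m) x ?_
          rintro ⟨hc1, hc2⟩
          exact hmn (hσmono.injective (huniq (σ m) (σ n₀) _ hc1 hc2 hx1 hx2))
        rw [hz, smul_zero]
      rw [Finset.sum_eq_single_of_mem n₀ hn₀t hside]
      calc ‖c n₀ • H (σ n₀) x‖ = ‖c n₀‖ * ‖H (σ n₀) x‖ := norm_smul _ _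
      _ ≤ b * 1 := mul_le_mul (hc n₀ hn₀t)
            (le_trans ((H (σ n₀)).norm_coe_le_norm x) (hHnorm (σ n₀)))
            (norm_nonneg _) hb
      _ = b := mul_one b
    · push_neg at hex
      have hall : ∀ m ∈ t, c m • H (σ m) x = 0 := by
        intro m hm
        rw [hHzero (σ m) x (fun hcc => absurd hcc.2 (not_le.mpr (hex m hm hcc.1))), smul_zero]
      rw [Finset.sum_eq_zero hall, norm_zero]
      exact hb
  have hsumH : ∀ a : ZeroAtInftyContinuousMap ℕ ℝ, Summable (fun n => a n • H (σ n)) := by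
    intro a
    rw [summable_iff_vanishing]
    intro e he
    obtain ⟨ε, hε, hball⟩ := Metric.mem_nhds_iff.mp he
    obtain ⟨Nn, hN⟩ := Metric.tendsto_atTop.mp (c0_tendsto a) (ε/2) (by positivity)
    refine ⟨Finset.range Nn, fun t ht => ?_⟩
    refine hball ?_
    rw [Metric.mem_ball, dist_zero_right]
    have hle : ‖∑ n ∈ t, a n • H (σ n)‖ ≤ ε/2 := by
      refine hfin t (fun n => a n) (ε/2) (by positivity) ?_
      intro n hn
      have hnN : Nn ≤ n := by
        by_contra hlt
        exact (Finset.disjoint_left.mp ht hn) (Finset.mem_range.mpr (not_le.mp hlt))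
      have hdist := hN n hnN
      rw [dist_zero_right] at hdist
      exact hdist.le
    exact lt_of_le_of_lt hle (by linarith)
  have hepsσ : ∀ n, eps (σ n) ≤ ((1:ℝ)/2)^(n+4) := by
    intro n
    rw [heps]
    refine pow_le_pow_of_le_one (by norm_num) (by norm_num) ?_
    have h9 : n ≤ σ n := hσmono.le_apply
    omega
  have hgeo : Summable (fun n : ℕ => ((1:ℝ)/2)^(n+4)) := by
    refine Summable.congr (((summable_geometric_of_lt_one (by norm_num : (0:ℝ) ≤ 1/2)
      (by norm_num)).mul_right (((1:ℝ)/2)^4))) ?_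
    intro n
    rw [← pow_add]
  have hgeosum : ∑' n : ℕ, ((1:ℝ)/2)^(n+4) = 1/8 := by
    have h1 : ∀ n : ℕ, ((1:ℝ)/2)^(n+4) = ((1:ℝ)/2)^n * ((1:ℝ)/2)^4 := fun n => pow_add _ n 4
    rw [tsum_congr h1, tsum_mul_right, tsum_geometric_of_lt_one (by norm_num) (by norm_num)]
    norm_num
  have hDnorm : ∀ (a : ZeroAtInftyContinuousMap ℕ ℝ) (n : ℕ),
      ‖a n • (F (σ n) - H (σ n))‖ ≤ ‖a‖ * ((1:ℝ)/2)^(n+4) := by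
    intro a n
    rw [norm_smul]
    exact mul_le_mul (c0_apply_le_norm a n) (le_trans (hFH (σ n)) (hepsσ n))
      (norm_nonneg _) (norm_nonneg a)
  have hsumDnorm : ∀ a : ZeroAtInftyContinuousMap ℕ ℝ,
      Summable (fun n => ‖a n • (F (σ n) - H (σ n))‖) := by
    intro a
    exact Summable.of_nonneg_of_le (fun n => norm_nonneg _) (hDnorm a) (hgeo.mul_left ‖a‖)
  have hsumD : ∀ a : ZeroAtInftyContinuousMap ℕ ℝ,
      Summable (fun n => a n • (F (σ n) - H (σ n))) := fun a => (hsumDnorm a).of_norm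
  -- the operator `Th`
  have hThnorm : ∀ a : ZeroAtInftyContinuousMap ℕ ℝ, ‖∑' n, a n • H (σ n)‖ ≤ ‖a‖ := by
    intro a
    have ht := (hsumH a).hasSum.tendsto_sum_nat
    refine le_of_tendsto ht.norm ?_
    filter_upwards with n
    exact hfin (Finset.range n) (fun m => a m) ‖a‖ (norm_nonneg a)
      (fun m _ => c0_apply_le_norm a m)
  set ThL : ZeroAtInftyContinuousMap ℕ ℝ →ₗ[ℝ] C(K, X) :=
    { toFun := fun a => ∑' n, a n • H (σ n)
      map_add' := by
        intro a b
        have he : ∀ n, (a + b) n • H (σ n) = a n • H (σ n) + b n • H (σ n) := by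
          intro n
          have h0 : (a + b) n = a n + b n := rfl
          rw [h0, add_smul]
        rw [tsum_congr he, Summable.tsum_add (hsumH a) (hsumH b)]
      map_smul' := by
        intro c a
        have he : ∀ n, (c • a) n • H (σ n) = c • (a n • H (σ n)) := by
          intro n
          have h0 : (c • a) n = c * a n := rfl
          rw [h0, ← smul_smul]
        rw [tsum_congr he, Summable.tsum_const_smul c (hsumH a)]
        rfl } with hThL
  set Th : ZeroAtInftyContinuousMap ℕ ℝ →L[ℝ] C(K, X) :=
    LinearMap.mkContinuous ThL 1 (fun a => by rw [one_mul]; exact hThnorm a) with hTh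
  have hThapply : ∀ a, Th a = ∑' n, a n • H (σ n) := fun a => rfl
  -- the operator `TD`
  have hTDnorm : ∀ a : ZeroAtInftyContinuousMap ℕ ℝ,
      ‖∑' n, a n • (F (σ n) - H (σ n))‖ ≤ (1/8 : ℝ) * ‖a‖ := by
    intro a
    calc ‖∑' n, a n • (F (σ n) - H (σ n))‖ ≤ ∑' n, ‖a n • (F (σ n) - H (σ n))‖ :=
          norm_tsum_le_tsum_norm (hsumDnorm a)
    _ ≤ ∑' n, ‖a‖ * ((1:ℝ)/2)^(n+4) :=
          Summable.tsum_le_tsum (hDnorm a) (hsumDnorm a) (hgeo.mul_left _)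
    _ = ‖a‖ * (1/8) := by rw [tsum_mul_left, hgeosum]
    _ = (1/8 : ℝ) * ‖a‖ := mul_comm _ _
  set TDL : ZeroAtInftyContinuousMap ℕ ℝ →ₗ[ℝ] C(K, X) :=
    { toFun := fun a => ∑' n, a n • (F (σ n) - H (σ n))
      map_add' := by
        intro a b
        have he : ∀ n, (a + b) n • (F (σ n) - H (σ n)) =
            a n • (F (σ n) - H (σ n)) + b n • (F (σ n) - H (σ n)) := by
          intro n
          have h0 : (a + b) n = a n + b n := rfl
          rw [h0, add_smul]
        rw [tsum_congr he, Summable.tsum_add (hsumD a) (hsumD b)]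
      map_smul' := by
        intro c a
        have he : ∀ n, (c • a) n • (F (σ n) - H (σ n)) =
            c • (a n • (F (σ n) - H (σ n))) := by
          intro n
          have h0 : (c • a) n = c * a n := rfl
          rw [h0, ← smul_smul]
        rw [tsum_congr he, Summable.tsum_const_smul c (hsumD a)]
        rfl } with hTDL
  set TD : ZeroAtInftyContinuousMap ℕ ℝ →L[ℝ] C(K, X) :=
    LinearMap.mkContinuous TDL (1/8 : ℝ) (fun a => hTDnorm a) with hTD
  have hTDapply : ∀ a, TD a = ∑' n, a n • (F (σ n) - H (σ n)) := fun a => rfl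
  -- the operator `Θ`
  set ΘL : C(K, X) →ₗ[ℝ] ZeroAtInftyContinuousMap ℕ ℝ :=
    { toFun := fun f => c0mk (fun n => Φf n f) (hΦtendsto f)
      map_add' := by
        intro f g
        apply DFunLike.ext
        intro n
        have h1 : ∀ h : C(K, X), ∀ hh,
            (c0mk (fun n => Φf n h) hh) n = Φf n h := fun h hh => rfl
        rw [h1 (f + g)]
        have h2 : ((c0mk (fun n => Φf n f) (hΦtendsto f) +
            c0mk (fun n => Φf n g) (hΦtendsto g)) : ZeroAtInftyContinuousMap ℕ ℝ) n =
            Φf n f + Φf n g := rfl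
        rw [h2, map_add]
      map_smul' := by
        intro c f
        apply DFunLike.ext
        intro n
        have h1 : (c0mk (fun n => Φf n (c • f)) (hΦtendsto (c • f))) n = Φf n (c • f) := rfl
        rw [RingHom.id_apply, h1]
        have h2 : ((c • c0mk (fun n => Φf n f) (hΦtendsto f)) :
            ZeroAtInftyContinuousMap ℕ ℝ) n = c * Φf n f := rfl
        rw [h2, map_smul]
        rfl } with hΘL
  set Θ : C(K, X) →L[ℝ] ZeroAtInftyContinuousMap ℕ ℝ :=
    LinearMap.mkContinuous ΘL 2
      (fun f => c0_norm_le _ _ (by positivity) (fun n => hΦbound n f)) with hΘ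
  have hΘapply : ∀ (f : C(K, X)) (n : ℕ), Θ f n = Φf n f := fun f n => rfl
  -- ### Step 5: identities and conclusion
  have hΦTh : ∀ (n : ℕ) (a : ZeroAtInftyContinuousMap ℕ ℝ), Φf n (Th a) = a n := by
    intro n a
    rw [hThapply, (Φf n).map_tsum (hsumH a)]
    have he : ∀ m, Φf n (a m • H (σ m)) = a m * (if n = m then 1 else 0) := by
      intro m
      rw [map_smul, hΦbio n m]
      rfl
    rw [tsum_congr he,
      tsum_eq_single n (fun m hmn => by rw [if_neg (fun h => hmn h.symm), mul_zero]),
      if_pos rfl, mul_one]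
  have hΦTD : ∀ (n : ℕ) (a : ZeroAtInftyContinuousMap ℕ ℝ),
      ‖Φf n (TD a)‖ ≤ (1/4 : ℝ) * ‖a‖ := by
    intro n a
    calc ‖Φf n (TD a)‖ ≤ 2 * ‖TD a‖ := hΦbound n (TD a)
    _ ≤ 2 * ((1/8 : ℝ) * ‖a‖) := by
        refine mul_le_mul_of_nonneg_left ?_ (by norm_num)
        rw [hTDapply]
        exact hTDnorm a
    _ = (1/4 : ℝ) * ‖a‖ := by ring
  set TF : ZeroAtInftyContinuousMap ℕ ℝ →L[ℝ] C(K, X) := Th + TD with hTF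
  have hTFapply : ∀ a, TF a = Th a + TD a := fun a => rfl
  have hsumF : ∀ a : ZeroAtInftyContinuousMap ℕ ℝ, Summable (fun n => a n • F (σ n)) := by
    intro a
    refine ((hsumH a).add (hsumD a)).congr ?_
    intro n
    rw [← smul_add, add_sub_cancel]
  have hTFsum : ∀ a, TF a = ∑' n, a n • F (σ n) := by
    intro a
    rw [hTFapply, hThapply, hTDapply, ← Summable.tsum_add (hsumH a) (hsumD a)]
    refine tsum_congr ?_
    intro n
    rw [← smul_add, add_sub_cancel]
  have hTFM : ∀ a, TF a ∈ M := by
    intro a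
    rw [hTFsum]
    refine hMclosed.mem_of_tendsto (hsumF a).hasSum.tendsto_sum_nat ?_
    filter_upwards with n
    exact Submodule.sum_mem M (fun i _ => M.smul_mem _ (hFM (σ i)))
  have hTFlow : ∀ a, ‖a‖ ≤ (8/3 : ℝ) * ‖TF a‖ := by
    intro a
    have h1 : ∀ n, ‖a n‖ ≤ 2 * ‖TF a‖ + (1/4 : ℝ) * ‖a‖ := by
      intro n
      have h2 : Φf n (TF a) = a n + Φf n (TD a) := by
        rw [hTFapply, map_add, hΦTh]
      have h2' : a n = Φf n (TF a) - Φf n (TD a) := by rw [h2]; ring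
      rw [h2']
      calc ‖Φf n (TF a) - Φf n (TD a)‖ ≤ ‖Φf n (TF a)‖ + ‖Φf n (TD a)‖ := norm_sub_le _ _
      _ ≤ 2 * ‖TF a‖ + (1/4 : ℝ) * ‖a‖ := add_le_add (hΦbound n (TF a)) (hΦTD n a)
    have h3 : ‖a‖ ≤ 2 * ‖TF a‖ + (1/4 : ℝ) * ‖a‖ :=
      c0_norm_le a _ (by positivity) h1
    linarith [norm_nonneg a, norm_nonneg (TF a)]
  have hTFanti : AntilipschitzWith (8/3 : ℝ≥0) TF := by
    refine ContinuousLinearMap.antilipschitz_of_bound TF ?_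
    intro a
    calc ‖a‖ ≤ (8/3 : ℝ) * ‖TF a‖ := hTFlow a
    _ = ((8/3 : ℝ≥0) : ℝ) * ‖TF a‖ := by norm_num
  set NN : Submodule ℝ C(K, X) := LinearMap.range (TF : ZeroAtInftyContinuousMap ℕ ℝ →ₗ[ℝ] C(K, X)) with hNN
  have hNle : NN ≤ M := by
    rintro x ⟨a, rfl⟩
    exact hTFM a
  have hNclosed : IsClosed (NN : Set C(K, X)) := by
    have h1 : IsClosed (Set.range TF) := hTFanti.isClosed_range TF.uniformContinuous
    have h2 : ((LinearMap.range (TF : ZeroAtInftyContinuousMap ℕ ℝ →ₗ[ℝ] C(K, X)) : Submodule ℝ C(K, X)) : Set C(K, X)) = Set.range TF :=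
      LinearMap.coe_range _
    rw [hNN, h2]
    exact h1
  haveI : CompleteSpace NN := hNclosed.completeSpace_coe
  set TF' : ZeroAtInftyContinuousMap ℕ ℝ →L[ℝ] NN :=
    TF.codRestrict NN (fun a => LinearMap.mem_range_self _ a) with hTF'
  have hTFinj : Function.Injective TF := by
    intro a b hab
    have h0 := hTFlow (a - b)
    rw [map_sub, hab, sub_self, norm_zero, mul_zero] at h0
    rw [← sub_eq_zero]
    exact norm_le_zero_iff.mp h0
  have hker : LinearMap.ker (TF' : ZeroAtInftyContinuousMap ℕ ℝ →ₗ[ℝ] NN) = ⊥ := by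
    apply LinearMap.ker_eq_bot_of_injective
    intro a b hab
    apply hTFinj
    have h0 := congrArg (Subtype.val) hab
    simpa [hTF', ContinuousLinearMap.coe_codRestrict_apply] using h0
  have hrange : LinearMap.range (TF' : ZeroAtInftyContinuousMap ℕ ℝ →ₗ[ℝ] NN) = ⊤ := by
    rw [LinearMap.range_eq_top]
    rintro ⟨x, hx⟩
    obtain ⟨a, ha⟩ := hx
    refine ⟨a, Subtype.ext ?_⟩
    simpa [hTF', ContinuousLinearMap.coe_codRestrict_apply] using ha
  set e := ContinuousLinearEquiv.ofBijective TF' hker hrange with he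
  have hNfin : ¬ FiniteDimensional ℝ NN := by
    intro hfin
    exact c0_not_finiteDimensional (LinearEquiv.finiteDimensional e.symm.toLinearEquiv)
  set W : ZeroAtInftyContinuousMap ℕ ℝ →L[ℝ] ZeroAtInftyContinuousMap ℕ ℝ :=
    Θ.comp TF with hW
  have hWapply : ∀ a n, W a n = a n + Φf n (TD a) := by
    intro a n
    have h1 : W a = Θ (TF a) := rfl
    rw [h1, hΘapply, hTFapply, map_add, hΦTh]
  have h1W : ‖(1 : ZeroAtInftyContinuousMap ℕ ℝ →L[ℝ] ZeroAtInftyContinuousMap ℕ ℝ) - W‖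
      ≤ 1/4 := by
    refine ContinuousLinearMap.opNorm_le_bound _ (by norm_num) ?_
    intro a
    refine c0_norm_le _ _ (by positivity) ?_
    intro n
    have h2 : (((1 : ZeroAtInftyContinuousMap ℕ ℝ →L[ℝ] ZeroAtInftyContinuousMap ℕ ℝ) - W) a) n
        = -(Φf n (TD a)) := by
      rw [ContinuousLinearMap.sub_apply, ContinuousLinearMap.one_apply]
      have h3 : ((a - W a : ZeroAtInftyContinuousMap ℕ ℝ)) n = a n - W a n := rfl
      rw [h3, hWapply]
      ring
    rw [h2, norm_neg]
    exact hΦTD n a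
  have hWlt : ‖(1 : ZeroAtInftyContinuousMap ℕ ℝ →L[ℝ] ZeroAtInftyContinuousMap ℕ ℝ) - W‖ < 1 :=
    lt_of_le_of_lt h1W (by norm_num)
  set u : (ZeroAtInftyContinuousMap ℕ ℝ →L[ℝ] ZeroAtInftyContinuousMap ℕ ℝ)ˣ :=
    Units.oneSub (1 - W) hWlt with hu
  have huval : (u : ZeroAtInftyContinuousMap ℕ ℝ →L[ℝ] ZeroAtInftyContinuousMap ℕ ℝ) = W := by
    have h0 : (u : ZeroAtInftyContinuousMap ℕ ℝ →L[ℝ] ZeroAtInftyContinuousMap ℕ ℝ)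
        = 1 - (1 - W) := rfl
    rw [h0]
    abel
  have h2u : ∀ a, (↑u⁻¹ : ZeroAtInftyContinuousMap ℕ ℝ →L[ℝ] ZeroAtInftyContinuousMap ℕ ℝ)
      (W a) = a := by
    intro a
    have h3 : ((↑u⁻¹ * ↑u : ZeroAtInftyContinuousMap ℕ ℝ →L[ℝ] ZeroAtInftyContinuousMap ℕ ℝ)) a
        = a := by rw [u.inv_mul]; rfl
    rw [ContinuousLinearMap.mul_apply, huval] at h3
    exact h3
  set prj : C(K, X) →L[ℝ] NN :=
    TF'.comp (((↑u⁻¹ : ZeroAtInftyContinuousMap ℕ ℝ →L[ℝ] ZeroAtInftyContinuousMap ℕ ℝ)).comp Θ)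
    with hprj
  have hproj : ∀ x : NN, prj x = x := by
    rintro ⟨x, hx⟩
    obtain ⟨a, rfl⟩ := hx
    apply Subtype.ext
    have h4 : ((prj (TF a)) : C(K, X))
        = TF ((↑u⁻¹ : ZeroAtInftyContinuousMap ℕ ℝ →L[ℝ] ZeroAtInftyContinuousMap ℕ ℝ)
            (Θ (TF a))) := rfl
    refine h4.trans ?_
    have h5 : Θ (TF a) = W a := rfl
    rw [h5, h2u]
    rfl
  exact ⟨NN, hNle, hNclosed, hNfin, ⟨e.symm⟩, ⟨prj, hproj⟩⟩
end
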